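/- arXiv:2604.10901 — 7 statements merged into one kernel-verified Lean document; each statement's English description precedes it below -/
import Mathlib

section
/- Let s > 1 be an integer and let 5 ≤ p₁ < p₂ < ⋯ < p_s be prime numbers. Let u be an integer with gcd(u, p₁p₂⋯p_s) = 1 and let v be an arbitrary integer. Then there exists an integer n with 0 ≤ n < (s+4)·2^(s-2) such that gcd(un + v, p₁p₂⋯p_s) = 1. -/
open Finset

lemma exists_t0 (p : ℕ) (hp : p.Prime) (u v c d : ℤ)
    (hu : ¬ (p:ℤ) ∣ u) (hd : ¬ (p:ℤ) ∣ d) :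
    ∃ t₀ : ℕ, t₀ < p ∧ ∀ t : ℕ, ((p:ℤ) ∣ u*(c + d*(t:ℤ)) + v ↔ t % p = t₀) := by
  haveI : Fact p.Prime := ⟨hp⟩
  have hpz : Prime (p:ℤ) := by
    rw [Int.prime_iff_natAbs_prime]; simpa using hp
  have ha : ((u*d : ℤ) : ZMod p) ≠ 0 := by
    rw [Ne, ZMod.intCast_zmod_eq_zero_iff_dvd]
    intro h
    rcases hpz.dvd_mul.mp h with h1 | h1
    · exact hu h1
    · exact hd h1
  set a : ZMod p := ((u*d : ℤ) : ZMod p) with ha_def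
  set b : ZMod p := ((u*c + v : ℤ) : ZMod p) with hb_def
  refine ⟨((-b) / a).val, ZMod.val_lt _, fun t => ?_⟩
  rw [← ZMod.intCast_zmod_eq_zero_iff_dvd]
  have hcast : ((u*(c + d*(t:ℤ)) + v : ℤ) : ZMod p) = b + a * (t : ZMod p) := by
    rw [ha_def, hb_def]; push_cast; ring
  rw [hcast]
  constructor
  · intro h
    have h2 : (t : ZMod p) = (-b) / a := by
      rw [eq_div_iff ha]; linear_combination h
    rw [← ZMod.val_natCast p t, h2]
  · intro h
    have h2 : (t : ZMod p) = (-b)/a := by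
      apply ZMod.val_injective
      rw [ZMod.val_natCast]; exact h
    rw [h2, mul_comm, div_mul_cancel₀ _ ha]
    ring

lemma count_lemma (u v : ℤ) (p : ℕ → ℕ) :
    ∀ (T : Finset ℕ), (∀ i ∈ T, (p i).Prime) →
    (∀ i ∈ T, ¬ ((p i : ℤ) ∣ u)) →
    (∀ i ∈ T, ∀ j ∈ T, p i = p j → i = j) →
    ∀ (c d : ℤ) (m : ℕ), (∀ i ∈ T, ¬ ((p i : ℤ) ∣ d)) →
    |(((range m).filter (fun t : ℕ => ∀ i ∈ T, ¬ ((p i : ℤ) ∣ u*(c + d*(t:ℤ)) + v))).card : ℚ)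
      - m * ∏ i ∈ T, (1 - 1/(p i : ℚ))| ≤ 2 ^ T.card - 1 := by
  classical
  intro T
  induction T using Finset.induction_on with
  | empty => simp
  | @insert i T hiT ih =>
    intro hprime hu hinj c d m hd
    set q := p i with hq_def
    have hqprime : q.Prime := hprime i (mem_insert_self i T)
    have hqpos : 0 < q := hqprime.pos
    have hqu : ¬ ((q:ℤ) ∣ u) := hu i (mem_insert_self i T)
    have hqd : ¬ ((q:ℤ) ∣ d) := hd i (mem_insert_self i T)
    obtain ⟨t₀, ht₀, hchar⟩ := exists_t0 q hqprime u v c d hqu hqd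
    set m' := (m - t₀ + q - 1) / q with hm'_def
    have hiff : ∀ j : ℕ, j < m' ↔ t₀ + q * j < m := by
      intro j
      rw [hm'_def, show (j < (m - t₀ + q - 1)/q) ↔ j + 1 ≤ (m - t₀ + q - 1)/q from Iff.rfl,
          Nat.le_div_iff_mul_le hqpos]
      have h1 : (j+1)*q = q*j + q := by ring
      omega
    -- nat bounds on m'
    have hA1 : m ≤ t₀ + q * m' := by
      have := hiff m'; omega
    have hA2 : q * m' < m + q := by
      rcases Nat.eq_zero_or_pos m' with h0 | h0
      · rw [h0]; omega
      · obtain ⟨j, hj⟩ : ∃ j, m' = j + 1 := ⟨m' - 1, by omega⟩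
        have h3 := (hiff j).mp (by omega)
        have h2 : q * m' = q*j + q := by rw [hj]; ring
        omega
    have hq0 : (0:ℚ) < q := by exact_mod_cast hqpos
    -- rational bound |m' - m/q| ≤ 1
    have hmq : |(m':ℚ) - m/q| ≤ 1 := by
      have e1 : (m':ℚ)*q < m + q := by
        exact_mod_cast (show m' * q < m + q by rw [Nat.mul_comm]; omega)
      have e2 : (m:ℚ) < (m'+1)*q := by
        have : m < (m'+1)*q := by
          have h2 : (m'+1)*q = q*m' + q := by ring
          omega
        exact_mod_cast this
      rw [abs_sub_le_iff]
      constructor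
      · have : (m':ℚ) < m/q + 1 := by
          rw [show (m:ℚ)/q + 1 = (m + q)/q by field_simp, lt_div_iff₀ hq0]; exact e1
        linarith
      · have : (m:ℚ)/q < m' + 1 := by
          rw [div_lt_iff₀ hq0]; exact e2
        linarith
    -- product bounds
    have hPr0 : (0:ℚ) ≤ ∏ j ∈ T, (1 - 1/(p j : ℚ)) := by
      apply Finset.prod_nonneg
      intro j hj
      have h2 : (1:ℚ) ≤ (p j : ℚ) := by
        exact_mod_cast (hprime j (mem_insert_of_mem hj)).one_lt.le
      have := div_le_one_of_le₀ h2 (by linarith)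
      linarith [this]
    have hPr1 : ∏ j ∈ T, (1 - 1/(p j : ℚ)) ≤ 1 := by
      apply Finset.prod_le_one
      · intro j hj
        have h2 : (1:ℚ) ≤ (p j : ℚ) := by
          exact_mod_cast (hprime j (mem_insert_of_mem hj)).one_lt.le
        have := div_le_one_of_le₀ h2 (by linarith)
        linarith [this]
      · intro j hj
        have h3 : (0:ℚ) ≤ 1/(p j:ℚ) := by positivity
        linarith
    -- set identities
    set S := (range m).filter (fun t : ℕ => ∀ j ∈ T, ¬ ((p j : ℤ) ∣ u*(c + d*(t:ℤ)) + v)) with hS_def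
    set B := S.filter (fun t : ℕ => (q:ℤ) ∣ u*(c + d*(t:ℤ)) + v) with hB_def
    have hset : (range m).filter (fun t : ℕ => ∀ j ∈ insert i T, ¬ ((p j : ℤ) ∣ u*(c + d*(t:ℤ)) + v))
        = S.filter (fun t : ℕ => ¬ ((q:ℤ) ∣ u*(c + d*(t:ℤ)) + v)) := by
      rw [hS_def, filter_filter]
      apply filter_congr
      intro t _
      simp only [Finset.forall_mem_insert, ← hq_def]
      tauto
    have hcardsplit : (S.filter (fun t : ℕ => ¬ ((q:ℤ) ∣ u*(c + d*(t:ℤ)) + v))).card = S.card - B.card := by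
      have h4 := Finset.card_filter_add_card_filter_not
        (s := S) (p := fun t : ℕ => (q:ℤ) ∣ u*(c + d*(t:ℤ)) + v)
      rw [← hB_def] at h4
      omega
    have hBle : B.card ≤ S.card := card_le_card (filter_subset _ _)
    -- the image identity
    have hexpr : ∀ jj : ℕ, u*(c + d*(((t₀ + q*jj : ℕ)):ℤ)) + v = u*((c + d*t₀) + (d*q)*(jj:ℤ)) + v := by
      intro jj; push_cast; ring
    set G' := (range m').filter (fun t : ℕ => ∀ j ∈ T, ¬ ((p j : ℤ) ∣ u*((c + d*(t₀:ℤ)) + (d*(q:ℤ))*(t:ℤ)) + v)) with hG'_def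
    have himage : B = G'.image (fun j => t₀ + q*j) := by
      ext t
      simp only [hB_def, hS_def, hG'_def, mem_filter, mem_image, mem_range]
      constructor
      · rintro ⟨⟨htm, hQ⟩, hP⟩
        have hmod : t % q = t₀ := (hchar t).mp hP
        have hkey : t = t₀ + q * (t / q) := by
          have := Nat.mod_add_div t q; omega
        refine ⟨t/q, ⟨⟨?_, ?_⟩, hkey.symm⟩⟩
        · rw [hiff]; omega
        · intro j hj hdvd
          apply hQ j hj
          rw [show t = t₀ + q*(t/q) from hkey]
          rw [hexpr]
          exact hdvd
      · rintro ⟨j, ⟨⟨hjm, hQ'⟩, rfl⟩⟩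
        refine ⟨⟨?_, ?_⟩, ?_⟩
        · rw [← hiff]; exact hjm
        · intro j' hj' hdvd
          apply hQ' j' hj'
          rw [hexpr] at hdvd
          exact hdvd
        · rw [hchar]
          rw [Nat.add_mul_mod_self_left, Nat.mod_eq_of_lt ht₀]
    have hBcard : B.card = G'.card := by
      rw [himage]
      rw [Finset.card_image_of_injective]
      intro a b hab
      simp only at hab
      have : q*a = q*b := by omega
      exact Nat.eq_of_mul_eq_mul_left hqpos this
    -- apply induction hypotheses
    have hT_prime : ∀ j ∈ T, (p j).Prime := fun j hj => hprime j (mem_insert_of_mem hj)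
    have hT_u : ∀ j ∈ T, ¬ ((p j : ℤ) ∣ u) := fun j hj => hu j (mem_insert_of_mem hj)
    have hT_inj : ∀ j ∈ T, ∀ j' ∈ T, p j = p j' → j = j' := fun j hj j' hj' h =>
      hinj j (mem_insert_of_mem hj) j' (mem_insert_of_mem hj') h
    have hS_bound := ih hT_prime hT_u hT_inj c d m (fun j hj => hd j (mem_insert_of_mem hj))
    have hd' : ∀ j ∈ T, ¬ ((p j : ℤ) ∣ d * q) := by
      intro j hj hdvd
      have hpj : (p j).Prime := hT_prime j hj
      have hpjz : Prime ((p j : ℤ)) := by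
        rw [Int.prime_iff_natAbs_prime]; simpa using hpj
      rcases hpjz.dvd_mul.mp hdvd with h1 | h1
      · exact hd j (mem_insert_of_mem hj) h1
      · have : p j ∣ q := by exact_mod_cast h1
        have : p j = q := ((Nat.prime_dvd_prime_iff_eq hpj hqprime).mp this)
        have : j = i := hinj j (mem_insert_of_mem hj) i (mem_insert_self i T) this
        subst this
        exact hiT hj
    have hG'_bound := ih hT_prime hT_u hT_inj (c + d*(t₀:ℤ)) (d*(q:ℤ)) m' hd'
    -- assemble
    rw [hset, prod_insert hiT, card_insert_of_notMem hiT]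
    have hcast : ((S.filter (fun t : ℕ => ¬ ((q:ℤ) ∣ u*(c + d*(t:ℤ)) + v))).card : ℚ)
        = (S.card : ℚ) - G'.card := by
      rw [hcardsplit, Nat.cast_sub hBle, hBcard]
    rw [hcast]
    set Pr : ℚ := ∏ j ∈ T, (1 - 1/(p j : ℚ)) with hPr_def
    have hkey : (S.card:ℚ) - G'.card - m*((1 - 1/(q:ℚ))*Pr)
        = ((S.card:ℚ) - m*Pr) - ((G'.card:ℚ) - m'*Pr) - ((m':ℚ) - m/q)*Pr := by
      field_simp
      ring
    rw [hkey]
    have habs1 : |((S.card:ℚ) - m*Pr) - ((G'.card:ℚ) - m'*Pr) - ((m':ℚ) - m/q)*Pr|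
        ≤ |(S.card:ℚ) - m*Pr| + |(G'.card:ℚ) - m'*Pr| + |((m':ℚ) - m/q)*Pr| := by
      calc |((S.card:ℚ) - m*Pr) - ((G'.card:ℚ) - m'*Pr) - ((m':ℚ) - m/q)*Pr|
          ≤ |((S.card:ℚ) - m*Pr) - ((G'.card:ℚ) - m'*Pr)| + |((m':ℚ) - m/q)*Pr| := abs_sub _ _
        _ ≤ |(S.card:ℚ) - m*Pr| + |(G'.card:ℚ) - m'*Pr| + |((m':ℚ) - m/q)*Pr| := by
            have := abs_sub ((S.card:ℚ) - m*Pr) ((G'.card:ℚ) - m'*Pr)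
            linarith
    have habs2 : |((m':ℚ) - m/q)*Pr| ≤ 1 := by
      rw [abs_mul]
      calc |(m':ℚ) - m/q| * |Pr| ≤ 1 * 1 := by
            apply mul_le_mul hmq _ (abs_nonneg _) zero_le_one
            rw [abs_le]; exact ⟨by linarith, hPr1⟩
        _ = 1 := by ring
    have hfin : (2:ℚ)^(T.card + 1) - 1 = (2^T.card - 1) + (2^T.card - 1) + 1 := by
      rw [pow_succ]; ring
    rw [hfin]
    linarith [hS_bound, hG'_bound]

lemma key_ineq : ∀ s : ℕ, 2 ≤ s → (4:ℚ) < (s + 4) * ∏ i ∈ Finset.Icc 1 s, (1 - 1/(2*i+3 : ℚ)) := by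
  intro s hs
  induction s, hs using Nat.le_induction with
  | base =>
    have h2 : (Finset.Icc 1 2 : Finset ℕ) = {1, 2} := rfl
    rw [h2]
    norm_num
  | succ n hn ih =>
    rw [Finset.prod_Icc_succ_top (by omega)]
    have hpos : (0:ℚ) < ∏ i ∈ Finset.Icc 1 n, (1 - 1/(2*i+3 : ℚ)) := by
      apply Finset.prod_pos
      intro i hi
      have : (3:ℚ) ≤ 2*i+3 := by
        have : (0:ℚ) ≤ i := by positivity
        linarith
      have : 1/(2*(i:ℚ)+3) ≤ 1/3 := by
        apply one_div_le_one_div_of_le <;> linarith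
      linarith
    have hfac : (0:ℚ) < 1 - 1/(2*(n+1 : ℕ)+3 : ℚ) := by
      push_cast
      have h0 : (0:ℚ) ≤ n := by positivity
      have : 1/(2*((n:ℚ)+1)+3) ≤ 1/5 := by
        apply one_div_le_one_div_of_le <;> linarith
      linarith
    -- (n+1+4) * (P * f) ≥ (n+4) * P  since (n+5)*f ≥ n+4
    have hstep : ((n:ℚ) + 4) * ∏ i ∈ Finset.Icc 1 n, (1 - 1/(2*i+3 : ℚ))
        ≤ ((n+1 : ℕ) + 4) * ((∏ i ∈ Finset.Icc 1 n, (1 - 1/(2*i+3 : ℚ))) * (1 - 1/(2*(n+1:ℕ)+3 : ℚ))) := by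
      push_cast
      rw [show ((n:ℚ)+1+4) * ((∏ i ∈ Finset.Icc 1 n, (1 - 1/(2*i+3 : ℚ))) * (1 - 1/(2*((n:ℚ)+1)+3)))
          = (((n:ℚ)+5) * (1 - 1/(2*((n:ℚ)+1)+3))) * ∏ i ∈ Finset.Icc 1 n, (1 - 1/(2*i+3 : ℚ)) by ring]
      apply mul_le_mul_of_nonneg_right _ hpos.le
      have h1 : (0:ℚ) < 2*(n:ℚ)+5 := by
        have : (0:ℚ) ≤ n := by positivity
        linarith
      rw [show ((n:ℚ)+5) * (1 - 1/(2*((n:ℚ)+1)+3)) = ((n:ℚ)+5) - ((n:ℚ)+5)/(2*(n:ℚ)+5) by ring_nf]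
      have h2 : ((n:ℚ)+5)/(2*(n:ℚ)+5) ≤ 1 := by
        rw [div_le_one h1]; linarith
      linarith
    calc (4:ℚ) < ((n:ℚ) + 4) * ∏ i ∈ Finset.Icc 1 n, (1 - 1/(2*i+3 : ℚ)) := ih
      _ ≤ _ := hstep

/-- avoiding prime divisors in an arithmetic progression. -/
theorem stmt_4 (s : ℕ) (hs : 1 < s) (p : ℕ → ℕ)
    (hp : ∀ i, 1 ≤ i → i ≤ s → (p i).Prime)
    (h5 : 5 ≤ p 1)
    (hmono : ∀ i j, 1 ≤ i → i < j → j ≤ s → p i < p j)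
    (u v : ℤ) (hu : Int.gcd u (∏ i ∈ Finset.Icc 1 s, (p i : ℤ)) = 1) :
    ∃ n : ℤ, 0 ≤ n ∧ n < ((s + 4) * 2 ^ (s - 2) : ℕ) ∧
      Int.gcd (u * n + v) (∏ i ∈ Finset.Icc 1 s, (p i : ℤ)) = 1 := by
  classical
  have hTprime : ∀ i ∈ Finset.Icc 1 s, (p i).Prime := by
    intro i hi
    rw [mem_Icc] at hi
    exact hp i hi.1 hi.2
  have hTu : ∀ i ∈ Finset.Icc 1 s, ¬ ((p i : ℤ) ∣ u) := by
    intro i hi hdvd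
    have hdvdP : (p i : ℤ) ∣ ∏ j ∈ Finset.Icc 1 s, (p j : ℤ) := Finset.dvd_prod_of_mem _ hi
    have h1 : (p i : ℤ) ∣ (Int.gcd u (∏ j ∈ Finset.Icc 1 s, (p j : ℤ)) : ℤ) :=
      Int.dvd_coe_gcd hdvd hdvdP
    rw [hu] at h1
    have h2 : (p i : ℤ) ≤ 1 := Int.le_of_dvd one_pos h1
    have h3 := (hTprime i hi).two_le
    have : ((2:ℕ):ℤ) ≤ (p i : ℤ) := by exact_mod_cast h3
    omega
  have hTinj : ∀ i ∈ Finset.Icc 1 s, ∀ j ∈ Finset.Icc 1 s, p i = p j → i = j := by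
    intro i hi j hj hij
    rw [mem_Icc] at hi hj
    rcases lt_trichotomy i j with h | h | h
    · exact absurd hij (Nat.ne_of_lt (hmono i j hi.1 h hj.2))
    · exact h
    · exact absurd hij.symm (Nat.ne_of_lt (hmono j i hj.1 h hi.2))
  have hlow : ∀ i, 1 ≤ i → i ≤ s → 2*i+3 ≤ p i := by
    intro i
    induction i with
    | zero => omega
    | succ k ihk =>
      intro _ h2
      rcases Nat.eq_zero_or_pos k with rfl | hk
      · simpa using h5
      · have hik := ihk hk (by omega)
        have hpk := hp k hk (by omega)
        have hpk1 := hp (k+1) (by omega) h2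
        have hlt := hmono k (k+1) hk (by omega) h2
        obtain ⟨a, ha⟩ := hpk.odd_of_ne_two (by omega)
        obtain ⟨b, hb⟩ := hpk1.odd_of_ne_two (by omega)
        omega
  set N := (s+4)*2^(s-2) with hN_def
  have hcount := count_lemma u v p (Finset.Icc 1 s) hTprime hTu hTinj 0 1 N
    (by
      intro i hi hdvd
      have h2 : (p i : ℤ) ≤ 1 := Int.le_of_dvd one_pos hdvd
      have h3 := (hTprime i hi).two_le
      have : ((2:ℕ):ℤ) ≤ (p i : ℤ) := by exact_mod_cast h3
      omega)
  rw [Nat.card_Icc] at hcount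
  simp only [Nat.add_sub_cancel] at hcount
  -- lower bound on the product
  have hfaclow : ∀ i ∈ Finset.Icc 1 s, (0:ℚ) ≤ 1 - 1/(2*i+3 : ℚ) := by
    intro i hi
    have h0 : (0:ℚ) ≤ (i:ℚ) := by positivity
    have : 1/(2*(i:ℚ)+3) ≤ 1/3 := by
      apply one_div_le_one_div_of_le <;> linarith
    linarith
  have hPrge : ∏ i ∈ Finset.Icc 1 s, (1 - 1/(2*i+3 : ℚ))
      ≤ ∏ i ∈ Finset.Icc 1 s, (1 - 1/(p i : ℚ)) := by
    apply Finset.prod_le_prod hfaclow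
    intro i hi
    rw [mem_Icc] at hi
    have hl := hlow i hi.1 hi.2
    have h0 : (0:ℚ) < 2*(i:ℚ)+3 := by
      have : (0:ℚ) ≤ (i:ℚ) := by positivity
      linarith
    have hcast : (2*(i:ℚ)+3) ≤ (p i : ℚ) := by exact_mod_cast (by push_cast; exact_mod_cast hl : ((2*i+3 : ℕ):ℚ) ≤ ((p i : ℕ):ℚ))
    have : 1/(p i : ℚ) ≤ 1/(2*(i:ℚ)+3) := by
      apply one_div_le_one_div_of_le h0 hcast
    linarith
  have hkey := key_ineq s hs
  have hpow : ((2:ℚ))^s = (2:ℚ)^(s-2) * 4 := by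
    have h4 : s - 2 + 2 = s := by omega
    rw [← h4, pow_add]; norm_num
  have hNcast : ((N:ℕ):ℚ) = ((s:ℚ)+4) * (2:ℚ)^(s-2) := by
    rw [hN_def]; push_cast; ring
  have hNP : (2:ℚ)^s < (N:ℚ) * ∏ i ∈ Finset.Icc 1 s, (1 - 1/(p i : ℚ)) := by
    calc (2:ℚ)^s = (2:ℚ)^(s-2) * 4 := hpow
      _ < (2:ℚ)^(s-2) * (((s:ℚ)+4) * ∏ i ∈ Finset.Icc 1 s, (1 - 1/(2*i+3 : ℚ))) := by
          apply mul_lt_mul_of_pos_left hkey (by positivity)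
      _ ≤ (2:ℚ)^(s-2) * (((s:ℚ)+4) * ∏ i ∈ Finset.Icc 1 s, (1 - 1/(p i : ℚ))) := by
          apply mul_le_mul_of_nonneg_left _ (by positivity)
          apply mul_le_mul_of_nonneg_left hPrge (by positivity)
      _ = (N:ℚ) * ∏ i ∈ Finset.Icc 1 s, (1 - 1/(p i : ℚ)) := by rw [hNcast]; ring
  have hcardpos : 0 < ((range N).filter (fun t : ℕ => ∀ i ∈ Finset.Icc 1 s, ¬ ((p i : ℤ) ∣ u*(0 + 1*(t:ℤ)) + v))).card := by
    by_contra hc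
    push_neg at hc
    have hc0 : (((range N).filter (fun t : ℕ => ∀ i ∈ Finset.Icc 1 s, ¬ ((p i : ℤ) ∣ u*(0 + 1*(t:ℤ)) + v))).card : ℚ) = 0 := by
      exact_mod_cast Nat.le_zero.mp hc
    rw [hc0] at hcount
    rw [abs_le] at hcount
    have h1 := hcount.1
    -- -(2^s - 1) ≤ 0 - N * Pr, so N * Pr ≤ 2^s - 1 < 2^s, contradiction
    linarith [hNP]
  obtain ⟨t, ht⟩ := Finset.card_pos.mp hcardpos
  rw [mem_filter, mem_range] at ht
  refine ⟨(t:ℤ), by positivity, by exact_mod_cast ht.1, ?_⟩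
  by_contra hne
  set P := ∏ i ∈ Finset.Icc 1 s, (p i : ℤ) with hP_def
  have hPpos : 0 < P := by
    rw [hP_def]
    apply Finset.prod_pos
    intro i hi
    have := (hTprime i hi).pos
    exact_mod_cast this
  set g := Int.gcd (u * (t:ℤ) + v) P with hg_def
  have hgne0 : g ≠ 0 := by
    intro h0
    rw [hg_def, Int.gcd_eq_zero_iff] at h0
    omega
  obtain ⟨r, hrprime, hrdvd⟩ := Nat.exists_prime_and_dvd hne
  have hrg : (r:ℤ) ∣ (g:ℤ) := by exact_mod_cast hrdvd
  have hr1 : (r:ℤ) ∣ u * (t:ℤ) + v := hrg.trans (Int.gcd_dvd_left _ _)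
  have hr2 : (r:ℤ) ∣ P := hrg.trans (Int.gcd_dvd_right _ _)
  have hrz : Prime (r:ℤ) := by
    rw [Int.prime_iff_natAbs_prime]; simpa using hrprime
  obtain ⟨i, hi, hri⟩ := hrz.exists_mem_finset_dvd (hP_def ▸ hr2)
  have hrpi : r ∣ p i := by exact_mod_cast hri
  have hreq : r = p i := (Nat.prime_dvd_prime_iff_eq hrprime (hTprime i hi)).mp hrpi
  have hbad : (p i : ℤ) ∣ u*(0 + 1*(t:ℤ)) + v := by
    rw [show u*(0 + 1*(t:ℤ)) + v = u * (t:ℤ) + v by ring, ← hreq]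
    exact hr1
  exact ht.2 i hi hbad
end

section
/- Let r_i denote the i-th smallest prime greater than 3 (so r₁ = 5, r₂ = 7, r₃ = 11, ...). For every integer t ≥ 16, the product r₇·r₈·⋯·r_t is strictly greater than ((t+3)·2^(t-3))³. -/
/-- `r i` is the `i`-th smallest prime greater than 3 (so `r 1 = 5`, `r 2 = 7`, ...). -/
noncomputable def r (i : ℕ) : ℕ := Nat.nth (fun q => Nat.Prime q ∧ 3 < q) (i - 1)

lemma pinf : {q | Nat.Prime q ∧ 3 < q}.Infinite := by
  apply (Nat.infinite_setOf_prime.diff (Set.finite_le_nat 3)).mono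
  intro q hq
  exact ⟨hq.1, by simpa using hq.2⟩

lemma rval (i v : ℕ) (hv : Nat.Prime v ∧ 3 < v)
    (h : Nat.count (fun q => Nat.Prime q ∧ 3 < q) v = i - 1) : r i = v := by
  rw [r, ← h, Nat.nth_count hv]

lemma r7 : r 7 = 23 := rval 7 23 (by norm_num) (by decide)
lemma r8 : r 8 = 29 := rval 8 29 (by norm_num) (by decide)
lemma r9 : r 9 = 31 := rval 9 31 (by norm_num) (by decide)
lemma r10 : r 10 = 37 := rval 10 37 (by norm_num) (by decide)
lemma r11 : r 11 = 41 := rval 11 41 (by norm_num) (by decide)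
lemma r12 : r 12 = 43 := rval 12 43 (by norm_num) (by decide)
lemma r13 : r 13 = 47 := rval 13 47 (by norm_num) (by decide)
lemma r14 : r 14 = 53 := rval 14 53 (by norm_num) (by decide)
lemma r15 : r 15 = 59 := rval 15 59 (by norm_num) (by decide)
lemma r16 : r 16 = 61 := rval 16 61 (by norm_num) (by decide)

theorem stmt_5 (t : ℕ) (ht : 16 ≤ t) :
    ((t + 3) * 2 ^ (t - 3)) ^ 3 < ∏ i ∈ Finset.Icc 7 t, r i := by
  induction t, ht using Nat.le_induction with
  | base =>
    have e : Finset.Icc 7 16 = ({7,8,9,10,11,12,13,14,15,16} : Finset ℕ) := by decide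
    rw [e]
    norm_num [Finset.prod_insert, Finset.mem_insert, r7, r8, r9, r10, r11, r12, r13, r14, r15, r16]
  | succ t ht ih =>
    rw [Finset.prod_Icc_succ_top (by omega)]
    have hr : (10 : ℕ) ≤ r (t + 1) := by
      have h1 : t ≤ Nat.nth (fun q => Nat.Prime q ∧ 3 < q) t :=
        (Nat.nth_strictMono pinf).le_apply
      have : r (t + 1) = Nat.nth (fun q => Nat.Prime q ∧ 3 < q) t := by
        simp [r]
      omega
    have h3 : t + 1 - 3 = (t - 3) + 1 := by omega
    have h4 : 8 * (t + 4) ^ 3 ≤ 10 * (t + 3) ^ 3 := by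
      obtain ⟨k, rfl⟩ := Nat.exists_eq_add_of_le ht
      nlinarith [sq_nonneg k]
    calc ((t + 1 + 3) * 2 ^ (t + 1 - 3)) ^ 3
        = 8 * (t + 4) ^ 3 * (2 ^ (t - 3)) ^ 3 := by rw [h3, pow_succ]; ring
      _ ≤ 10 * (t + 3) ^ 3 * (2 ^ (t - 3)) ^ 3 := Nat.mul_le_mul_right _ h4
      _ = ((t + 3) * 2 ^ (t - 3)) ^ 3 * 10 := by ring
      _ ≤ ((t + 3) * 2 ^ (t - 3)) ^ 3 * r (t + 1) := Nat.mul_le_mul_left _ hr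
      _ < (∏ i ∈ Finset.Icc 7 t, r i) * r (t + 1) := by
          have hrpos : 0 < r (t + 1) := by omega
          exact (Nat.mul_lt_mul_right hrpos).mpr ih
end

section
/- Let p be an odd prime, u a positive integer coprime to p, v an arbitrary integer, and L a diagonal p-stable ternary ℤ-lattice. For any positive integer s, the number of integers n with 1 ≤ n ≤ p^s such that un + v is not represented by L over ℤ_p is at most (p^s + p + 2)/(2p+2) when s is odd, and at most (p^s + 2p + 1)/(2p+2) when s is even. -/
open scoped BigOperators

/-- The bilinear form of the diagonal ternary lattice `⟨a 0, a 1, a 2⟩` over `ℤ_p`. -/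
noncomputable def diagB (p : ℕ) [Fact (Nat.Prime p)] (a : Fin 3 → ℤ) (x y : Fin 3 → ℤ_[p]) : ℤ_[p] :=
  ∑ i, (a i : ℤ_[p]) * x i * y i

/-- `N` is represented by the diagonal ternary lattice `⟨a 0, a 1, a 2⟩` over `ℤ_p`. -/
def diagRep (p : ℕ) [Fact (Nat.Prime p)] (a : Fin 3 → ℤ) (N : ℤ) : Prop :=
  ∃ x : Fin 3 → ℤ_[p], (∑ i, (a i : ℤ_[p]) * (x i) ^ 2) = (N : ℤ_[p])

/-- `p`-stability of the diagonal ternary lattice `⟨a 0, a 1, a 2⟩` (for odd `p`):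
either the hyperbolic plane `⟨1,-1⟩` is represented by `L_p`, or
`L_p ≅ ⟨1,-Δ_p⟩ ⊥ ⟨pε_p⟩` with `Δ_p` a non-square unit and `ε_p` a unit. -/
def IsPStable (p : ℕ) [Fact (Nat.Prime p)] (a : Fin 3 → ℤ) : Prop :=
  (∃ u v : Fin 3 → ℤ_[p],
      diagB p a u u = 1 ∧ diagB p a v v = -1 ∧ diagB p a u v = 0) ∨
  (∃ Δ ε : ℤ_[p]ˣ, ¬ IsSquare (Δ : ℤ_[p]) ∧
    ∃ u v w : Fin 3 → ℤ_[p],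
      diagB p a u u = 1 ∧ diagB p a v v = -(Δ : ℤ_[p]) ∧
      diagB p a w w = (p : ℤ_[p]) * (ε : ℤ_[p]) ∧
      diagB p a u v = 0 ∧ diagB p a u w = 0 ∧ diagB p a v w = 0 ∧
      IsUnit (Matrix.det (Matrix.of ![u, v, w])))

namespace StmtAux12

open PadicInt

variable {p : ℕ} [hp : Fact p.Prime]

lemma toZMod_eq_zero_iff {z : ℤ_[p]} : PadicInt.toZMod z = 0 ↔ ¬ IsUnit z := by
  rw [← RingHom.mem_ker, PadicInt.ker_toZMod, IsLocalRing.mem_maximalIdeal, mem_nonunits_iff]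

lemma pdvd2 (hp2 : p ≠ 2) : ¬ ((p:ℤ) ∣ 2) := by
  intro h
  have hnat : p ∣ 2 := by exact_mod_cast h
  exact hp2 ((Nat.prime_dvd_prime_iff_eq hp.out Nat.prime_two).mp hnat)

lemma two_isUnit (hp2 : p ≠ 2) : IsUnit (2 : ℤ_[p]) := by
  rw [PadicInt.isUnit_iff]
  have h1 : ‖(2 : ℤ_[p])‖ ≤ 1 := PadicInt.norm_le_one _
  rcases lt_or_eq_of_le h1 with h | h
  · exfalso
    apply pdvd2 hp2
    have := (PadicInt.norm_int_lt_one_iff_dvd 2).mp (by exact_mod_cast h)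
    exact_mod_cast this
  · exact h

/-- Hensel lifting of a square root mod `p`. -/
lemma sq_lift (hp2 : p ≠ 2) {c : ℤ_[p]} {t : ZMod p}
    (ht : t ≠ 0) (hc : PadicInt.toZMod c = t * t) : ∃ b : ℤ_[p], b * b = c := by
  haveI : NeZero p := ⟨hp.out.ne_zero⟩
  set a : ℤ_[p] := ((t.val : ℤ_[p])) with ha
  have hta : PadicInt.toZMod a = t := by
    rw [ha, map_natCast, ZMod.natCast_zmod_val]
  have hker : ¬ IsUnit (c - a * a) := by
    rw [← toZMod_eq_zero_iff, map_sub, map_mul, hta, hc, sub_self]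
  have hlt : ‖c - a * a‖ < 1 := PadicInt.not_isUnit_iff.mp hker
  have haU : IsUnit a := by
    by_contra hcon
    rw [← toZMod_eq_zero_iff, hta] at hcon
    exact ht hcon
  have hna : ‖a‖ = 1 := PadicInt.isUnit_iff.mp haU
  -- Hensel
  set F : Polynomial ℤ_[p] := Polynomial.X ^ 2 - Polynomial.C c with hF
  have hFa : F.eval a = a * a - c := by simp [hF, sq]
  have hF' : F.derivative.eval a = 2 * a := by
    simp [hF]
    norm_num
  have hcond : ‖F.eval a‖ < ‖F.derivative.eval a‖ ^ 2 := by
    rw [hFa, hF']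
    have : ‖(2 : ℤ_[p]) * a‖ = 1 := by
      rw [norm_mul, hna, PadicInt.isUnit_iff.mp (two_isUnit hp2), one_mul]
    rw [this]
    rw [show a * a - c = -(c - a * a) by ring, norm_neg]
    simpa using hlt
  obtain ⟨z, hz, -⟩ := hensels_lemma hcond
  refine ⟨z, ?_⟩
  have h0 : z ^ 2 - c = 0 := by simpa [hF] using hz
  rw [← sq]
  exact sub_eq_zero.mp h0

lemma isSquare_of_toZMod (hp2 : p ≠ 2) {c : ℤ_[p]} (hc : IsUnit c)
    (h : IsSquare (PadicInt.toZMod c)) : IsSquare c := by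
  obtain ⟨t, ht⟩ := h
  have htne : t ≠ 0 := by
    intro h0
    rw [h0, mul_zero, toZMod_eq_zero_iff] at ht
    exact ht hc
  obtain ⟨b, hb⟩ := sq_lift hp2 htne ht
  exact ⟨b, hb.symm⟩

lemma toZMod_ne_zero (hp2 : p ≠ 2) (A : ℤ_[p]ˣ) : PadicInt.toZMod (A : ℤ_[p]) ≠ 0 := by
  rw [ne_eq, toZMod_eq_zero_iff, not_not]
  exact A.isUnit

lemma isSquare_ratio (hp2 : p ≠ 2) (A B : ℤ_[p]ˣ)
    (hA : ¬ IsSquare (A : ℤ_[p])) (hB : ¬ IsSquare (B : ℤ_[p])) :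
    IsSquare ((A : ℤ_[p]) * ((B⁻¹ : ℤ_[p]ˣ) : ℤ_[p])) := by
  haveI : NeZero p := ⟨hp.out.ne_zero⟩
  have hchar : ringChar (ZMod p) ≠ 2 := by
    rw [ZMod.ringChar_zmod_n]; exact hp2
  set χ := quadraticChar (ZMod p)
  have hAz : PadicInt.toZMod (A : ℤ_[p]) ≠ 0 := toZMod_ne_zero hp2 A
  have hBz : PadicInt.toZMod (B : ℤ_[p]) ≠ 0 := toZMod_ne_zero hp2 B
  have hBiz : PadicInt.toZMod ((B⁻¹ : ℤ_[p]ˣ) : ℤ_[p]) ≠ 0 := toZMod_ne_zero hp2 B⁻¹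
  have hAchi : χ (PadicInt.toZMod (A : ℤ_[p])) = -1 := by
    rw [quadraticChar_neg_one_iff_not_isSquare]
    intro hsq
    exact hA (isSquare_of_toZMod hp2 A.isUnit hsq)
  have hBchi : χ (PadicInt.toZMod (B : ℤ_[p])) = -1 := by
    rw [quadraticChar_neg_one_iff_not_isSquare]
    intro hsq
    exact hB (isSquare_of_toZMod hp2 B.isUnit hsq)
  have hmulBBi : PadicInt.toZMod (B : ℤ_[p]) * PadicInt.toZMod ((B⁻¹ : ℤ_[p]ˣ) : ℤ_[p]) = 1 := by
    rw [← map_mul]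
    rw [← Units.val_mul, mul_inv_cancel, Units.val_one, map_one]
  have hBichi : χ (PadicInt.toZMod ((B⁻¹ : ℤ_[p]ˣ) : ℤ_[p])) = -1 := by
    have := map_mul χ (PadicInt.toZMod (B : ℤ_[p])) (PadicInt.toZMod ((B⁻¹ : ℤ_[p]ˣ) : ℤ_[p]))
    rw [hmulBBi, map_one, hBchi] at this
    linarith [this]
  apply isSquare_of_toZMod hp2 (A.isUnit.mul B⁻¹.isUnit)
  rw [map_mul]
  have hchimul := map_mul χ (PadicInt.toZMod (A : ℤ_[p])) (PadicInt.toZMod ((B⁻¹ : ℤ_[p]ˣ) : ℤ_[p]))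
  rw [hAchi, hBichi] at hchimul
  have hne : PadicInt.toZMod (A : ℤ_[p]) * PadicInt.toZMod ((B⁻¹ : ℤ_[p]ˣ) : ℤ_[p]) ≠ 0 :=
    mul_ne_zero hAz hBiz
  rw [← quadraticChar_one_iff_isSquare hne, hchimul]
  norm_num

lemma zmod_binary (hp2 : p ≠ 2) (d η : ZMod p) (hd : d ≠ 0) :
    ∃ x y : ZMod p, x ^ 2 - d * y ^ 2 = η := by
  haveI : NeZero p := ⟨hp.out.ne_zero⟩
  have hodd : Fintype.card (ZMod p) % 2 = 1 := by
    rw [ZMod.card]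
    exact Nat.Prime.eq_two_or_odd hp.out |>.resolve_left hp2
  set f : Polynomial (ZMod p) := Polynomial.X ^ 2 - Polynomial.C η with hf
  set g : Polynomial (ZMod p) := Polynomial.C (-d) * Polynomial.X ^ 2 with hg
  have hf2 : f.degree = 2 := Polynomial.degree_X_pow_sub_C (by norm_num) _
  have hg2 : g.degree = 2 := by
    rw [hg, Polynomial.degree_C_mul_X_pow _ (neg_ne_zero.mpr hd)]
    norm_cast
  obtain ⟨x, y, hxy⟩ := FiniteField.exists_root_sum_quadratic hf2 hg2 hodd
  refine ⟨x, y, ?_⟩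
  simp only [hf, hg, Polynomial.eval_sub, Polynomial.eval_pow, Polynomial.eval_X,
    Polynomial.eval_C, Polynomial.eval_mul, Polynomial.eval_neg] at hxy
  linear_combination hxy

lemma binary_rep (hp2 : p ≠ 2) (Δ : ℤ_[p]ˣ) (hΔ : ¬ IsSquare (Δ : ℤ_[p]))
    {η : ℤ_[p]} (hη : IsUnit η) :
    ∃ x y : ℤ_[p], x * x - (Δ : ℤ_[p]) * (y * y) = η := by
  haveI : NeZero p := ⟨hp.out.ne_zero⟩
  set d : ZMod p := PadicInt.toZMod (Δ : ℤ_[p]) with hdd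
  set e : ZMod p := PadicInt.toZMod ((Δ⁻¹ : ℤ_[p]ˣ) : ℤ_[p]) with hee
  have hde : d * e = 1 := by
    rw [hdd, hee, ← map_mul, ← Units.val_mul, mul_inv_cancel, Units.val_one, map_one]
  have hd : d ≠ 0 := toZMod_ne_zero hp2 Δ
  set ηb : ZMod p := PadicInt.toZMod η with hηb
  have hηne : ηb ≠ 0 := by
    rw [hηb, ne_eq, toZMod_eq_zero_iff, not_not]; exact hη
  obtain ⟨xb, yb, hxy⟩ := zmod_binary hp2 d ηb hd
  by_cases hx : xb = 0
  · -- then d * yb^2 = -ηb ≠ 0, so yb ≠ 0; solve for y by Hensel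
    have hyne : yb ≠ 0 := by
      intro h0
      rw [hx, h0] at hxy
      simp at hxy
      exact hηne hxy.symm
    set x0 : ℤ_[p] := (xb.val : ℤ_[p]) with hx0
    have hx0b : PadicInt.toZMod x0 = xb := by rw [hx0, map_natCast, ZMod.natCast_zmod_val]
    set c : ℤ_[p] := (x0 * x0 - η) * ((Δ⁻¹ : ℤ_[p]ˣ) : ℤ_[p]) with hc
    have hcb : PadicInt.toZMod c = yb * yb := by
      have : PadicInt.toZMod c = (xb * xb - ηb) * e := by
        rw [hc, map_mul, map_sub, map_mul, hx0b]
      rw [this]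
      have hsub : xb * xb - ηb = d * (yb * yb) := by linear_combination hxy
      rw [hsub]
      calc d * (yb * yb) * e = (yb * yb) * (d * e) := by ring
        _ = yb * yb := by rw [hde, mul_one]
    obtain ⟨b, hb⟩ := sq_lift hp2 hyne hcb
    refine ⟨x0, b, ?_⟩
    have : (Δ : ℤ_[p]) * (b * b) = (x0 * x0 - η) * (((Δ⁻¹ : ℤ_[p]ˣ) : ℤ_[p]) * (Δ : ℤ_[p])) := by
      rw [hb, hc]; ring
    have hΔi : ((Δ⁻¹ : ℤ_[p]ˣ) : ℤ_[p]) * (Δ : ℤ_[p]) = 1 := by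
      rw [← Units.val_mul, inv_mul_cancel, Units.val_one]
    rw [hΔi, mul_one] at this
    linear_combination -this
  · -- Hensel in x
    set y0 : ℤ_[p] := (yb.val : ℤ_[p]) with hy0
    have hy0b : PadicInt.toZMod y0 = yb := by rw [hy0, map_natCast, ZMod.natCast_zmod_val]
    set c : ℤ_[p] := η + (Δ : ℤ_[p]) * (y0 * y0) with hc
    have hcb : PadicInt.toZMod c = xb * xb := by
      rw [hc, map_add, map_mul, map_mul, hy0b]
      change ηb + d * (yb * yb) = xb * xb
      linear_combination -hxy
    obtain ⟨b, hb⟩ := sq_lift hp2 hx hcb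
    exact ⟨b, y0, by rw [hb, hc]; ring⟩

lemma rep_combo (a : Fin 3 → ℤ) (u v w : Fin 3 → ℤ_[p]) (q1 q2 q3 : ℤ_[p])
    (huu : diagB p a u u = q1) (hvv : diagB p a v v = q2) (hww : diagB p a w w = q3)
    (huv : diagB p a u v = 0) (huw : diagB p a u w = 0) (hvw : diagB p a v w = 0)
    (α β γ : ℤ_[p]) (N : ℤ) (h : α ^ 2 * q1 + β ^ 2 * q2 + γ ^ 2 * q3 = (N : ℤ_[p])) :
    diagRep p a N := by
  refine ⟨fun i => α * u i + β * v i + γ * w i, ?_⟩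
  simp only [diagB, Fin.sum_univ_three] at huu hvv hww huv huw hvw
  simp only [Fin.sum_univ_three]
  linear_combination α ^ 2 * huu + β ^ 2 * hvv + γ ^ 2 * hww + (2 * α * β) * huv
    + (2 * α * γ) * huw + (2 * β * γ) * hvw + h

lemma zero_vec_B (a : Fin 3 → ℤ) (x : Fin 3 → ℤ_[p]) :
    diagB p a x (fun _ => 0) = 0 := by
  simp [diagB]

lemma zero_vec_B' (a : Fin 3 → ℤ) (x : Fin 3 → ℤ_[p]) :
    diagB p a (fun _ => 0) x = 0 := by
  simp [diagB]

/-- Case 1: the hyperbolic plane gives universal representation. -/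
lemma rep_of_hyperbolic (hp2 : p ≠ 2) (a : Fin 3 → ℤ) (u v : Fin 3 → ℤ_[p])
    (huu : diagB p a u u = 1) (hvv : diagB p a v v = -1) (huv : diagB p a u v = 0)
    (N : ℤ) : diagRep p a N := by
  obtain ⟨h2, hh⟩ := (two_isUnit (p := p) hp2)
  set h := ((h2⁻¹ : ℤ_[p]ˣ) : ℤ_[p]) with hhdef
  have h2h : (2 : ℤ_[p]) * h = 1 := by
    rw [hhdef, ← hh, ← Units.val_mul, mul_inv_cancel, Units.val_one]
  apply rep_combo a u v (fun _ => 0) 1 (-1) 0 huu hvv (zero_vec_B a _) huv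
    (zero_vec_B a _) (zero_vec_B a _) (((N : ℤ_[p]) + 1) * h) (((N : ℤ_[p]) - 1) * h) 0 N
  have : (((N : ℤ_[p]) + 1) * h) ^ 2 - (((N : ℤ_[p]) - 1) * h) ^ 2
      = (N : ℤ_[p]) * ((2 : ℤ_[p]) * h) ^ 2 := by ring
  rw [h2h] at this
  linear_combination this

/-- Case 2 trichotomy: non-represented numbers lie in `{p Δ ε γ²}`. -/
lemma rep_or_S (hp2 : p ≠ 2) (a : Fin 3 → ℤ) (Δ ε : ℤ_[p]ˣ) (hΔ : ¬ IsSquare (Δ : ℤ_[p]))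
    (u v w : Fin 3 → ℤ_[p]) (huu : diagB p a u u = 1) (hvv : diagB p a v v = -(Δ : ℤ_[p]))
    (hww : diagB p a w w = (p : ℤ_[p]) * (ε : ℤ_[p]))
    (huv : diagB p a u v = 0) (huw : diagB p a u w = 0) (hvw : diagB p a v w = 0)
    (N : ℤ) (hN : ¬ diagRep p a N) :
    ∃ γ : ℤ_[p], (N : ℤ_[p]) = (p : ℤ_[p]) * ((Δ : ℤ_[p]) * (ε : ℤ_[p])) * γ ^ 2 := by
  by_cases h0 : (N : ℤ_[p]) = 0
  · exfalso
    apply hN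
    exact rep_combo a u v w _ _ _ huu hvv hww huv huw hvw 0 0 0 N (by rw [h0]; ring)
  -- factor N
  have hfact := PadicInt.unitCoeff_spec h0
  set k : ℕ := ((N : ℤ_[p]).valuation) with hk
  set η : ℤ_[p]ˣ := PadicInt.unitCoeff h0 with hη
  rcases Nat.even_or_odd k with ⟨t, ht⟩ | ⟨t, ht⟩
  · -- even valuation: representable, contradiction
    exfalso
    apply hN
    obtain ⟨x, y, hxy⟩ := binary_rep hp2 Δ hΔ η.isUnit
    apply rep_combo a u v w _ _ _ huu hvv hww huv huw hvw
      ((p : ℤ_[p]) ^ t * x) ((p : ℤ_[p]) ^ t * y) 0 N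
    have hNf : (N : ℤ_[p]) = (η : ℤ_[p]) * ((p : ℤ_[p]) ^ t) ^ 2 := by
      rw [hfact, ht]; ring
    linear_combination ((p : ℤ_[p]) ^ t) ^ 2 * hxy - hNf
  · -- odd valuation
    set μ : ℤ_[p]ˣ := ε⁻¹ * η with hμ
    have hεμ : (ε : ℤ_[p]) * (μ : ℤ_[p]) = (η : ℤ_[p]) := by
      rw [hμ]
      push_cast
      rw [← mul_assoc, ← Units.val_mul, mul_inv_cancel, Units.val_one, one_mul]
    by_cases hsq : IsSquare ((μ : ℤ_[p]))
    · exfalso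
      apply hN
      obtain ⟨b, hb⟩ := hsq
      apply rep_combo a u v w _ _ _ huu hvv hww huv huw hvw 0 0 ((p : ℤ_[p]) ^ t * b) N
      have hNf : (N : ℤ_[p]) = (η : ℤ_[p]) * (p : ℤ_[p]) ^ (2 * t + 1) := by
        rw [hfact, ht]
      rw [hNf, ← hεμ, hb]
      ring
    · have hrat := isSquare_ratio hp2 μ Δ hsq hΔ
      obtain ⟨b, hb⟩ := hrat
      have hΔi : ((Δ⁻¹ : ℤ_[p]ˣ) : ℤ_[p]) * (Δ : ℤ_[p]) = 1 := by
        rw [← Units.val_mul, inv_mul_cancel, Units.val_one]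
      have hμΔ : (μ : ℤ_[p]) = (Δ : ℤ_[p]) * (b * b) := by
        have := congrArg (fun z => z * (Δ : ℤ_[p])) hb
        calc (μ : ℤ_[p]) = (μ : ℤ_[p]) * (((Δ⁻¹ : ℤ_[p]ˣ) : ℤ_[p]) * (Δ : ℤ_[p])) := by
              rw [hΔi, mul_one]
          _ = (b * b) * (Δ : ℤ_[p]) := by rw [← mul_assoc, hb]
          _ = (Δ : ℤ_[p]) * (b * b) := by ring
      refine ⟨(p : ℤ_[p]) ^ t * b, ?_⟩
      have hNf : (N : ℤ_[p]) = (η : ℤ_[p]) * (p : ℤ_[p]) ^ (2 * t + 1) := by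
        rw [hfact, ht]
      rw [hNf, ← hεμ, hμΔ]
      ring

/-- squares modulo `p^m`, as residues in `[0, p^m)`. -/
def sqSet (p m : ℕ) : Finset ℕ := (Finset.range (p^m)).image (fun c => c^2 % p^m)

/-- unit squares modulo `p^e`. -/
def usqSet (p e : ℕ) : Finset ℕ :=
  ((Finset.range (p^e)).filter (fun c => ¬ p ∣ c)).image (fun c => c^2 % p^e)

lemma multiples_card (p e : ℕ) (hp : 0 < p) (he : 1 ≤ e) :
    ((Finset.range (p^e)).filter (fun c => p ∣ c)).card = p^(e-1) := by
  have : (Finset.range (p^e)).filter (fun c => p ∣ c)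
      = (Finset.range (p^(e-1))).image (fun j => p * j) := by
    ext x
    simp only [Finset.mem_filter, Finset.mem_range, Finset.mem_image]
    constructor
    · rintro ⟨hx, j, rfl⟩
      refine ⟨j, ?_, rfl⟩
      have hpe : p^e = p * p^(e-1) := by
        conv_lhs => rw [show e = 1 + (e-1) by omega]
        rw [pow_add, pow_one]
      rw [hpe] at hx
      exact lt_of_mul_lt_mul_left hx (Nat.zero_le p)
    · rintro ⟨j, hj, rfl⟩
      refine ⟨?_, ⟨j, rfl⟩⟩
      have hpe : p^e = p * p^(e-1) := by
        conv_lhs => rw [show e = 1 + (e-1) by omega]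
        rw [pow_add, pow_one]
      rw [hpe]
      exact (Nat.mul_lt_mul_left hp).mpr hj
  rw [this, Finset.card_image_of_injective _ (fun a b h => by
    exact Nat.eq_of_mul_eq_mul_left hp h), Finset.card_range]

lemma usq_two_mul_card (p e : ℕ) (hp : p.Prime) (hp2 : p ≠ 2) (he : 1 ≤ e) :
    2 * (usqSet p e).card ≤ p^e - p^(e-1) := by
  have hkey : 2 * (usqSet p e).card
      ≤ ((Finset.range (p^e)).filter (fun c => ¬ p ∣ c)).card := by
    apply Finset.mul_card_image_le_card
    intro b hb
    obtain ⟨c, hc, hcb⟩ := Finset.mem_image.mp hb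
    obtain ⟨hcr, hcd⟩ := Finset.mem_filter.mp hc
    have hcr' : c < p^e := Finset.mem_range.mp hcr
    have hc0 : 0 < c := by
      rcases Nat.eq_zero_or_pos c with h | h
      · exact absurd (h ▸ dvd_zero p) hcd
      · exact h
    set c' : ℕ := p^e - c with hc'
    have hc'lt : c' < p^e := by omega
    have hc'd : ¬ p ∣ c' := by
      intro hd
      apply hcd
      have hpe : p ∣ p^e := dvd_pow_self p (by omega)
      have := Nat.dvd_sub hpe hd
      rwa [show p^e - c' = c by omega] at this
    have hne : c' ≠ c := by
      intro h
      have h2c : 2 * c = p^e := by omega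
      apply hcd
      have : p ∣ 2 * c := h2c ▸ dvd_pow_self p (by omega)
      rcases (Nat.Prime.dvd_mul hp).mp this with h | h
      · exact absurd ((Nat.prime_dvd_prime_iff_eq hp Nat.prime_two).mp h) hp2
      · exact h
    have hc'sq : c'^2 % p^e = b := by
      rw [← hcb]
      have hcast : ((c' : ℤ)^2 - (c:ℤ)^2) = (p^e : ℤ) * ((p:ℤ)^e - 2*c) := by
        have : (c' : ℤ) = (p^e : ℤ) - c := by
          rw [hc']
          push_cast [Nat.cast_sub (le_of_lt hcr')]
          push_cast
          ring
        rw [this]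
        push_cast
        ring
      have hmod : (c' : ℤ)^2 % (p^e : ℤ) = (c : ℤ)^2 % (p^e : ℤ) := by
        apply Int.ModEq.symm
        rw [Int.modEq_iff_dvd]
        exact ⟨((p:ℤ)^e - 2*c), by push_cast at hcast ⊢; linarith [hcast]⟩
      have := hmod
      zify
      push_cast at this ⊢
      exact this
    have hpair : ({c', c} : Finset ℕ) ⊆
        ((Finset.range (p^e)).filter (fun x => ¬ p ∣ x)).filter (fun x => x^2 % p^e = b) := by
      intro x hx
      simp only [Finset.mem_insert, Finset.mem_singleton] at hx
      rcases hx with rfl | rfl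
      · exact Finset.mem_filter.mpr ⟨Finset.mem_filter.mpr
          ⟨Finset.mem_range.mpr hc'lt, hc'd⟩, hc'sq⟩
      · exact Finset.mem_filter.mpr ⟨hc, hcb⟩
    calc 2 = ({c', c} : Finset ℕ).card := by rw [Finset.card_insert_of_notMem (by simpa using hne),
          Finset.card_singleton]
      _ ≤ _ := Finset.card_le_card hpair
  have hfc : ((Finset.range (p^e)).filter (fun c => ¬ p ∣ c)).card = p^e - p^(e-1) := by
    have h1 := Finset.card_filter_add_card_filter_not
      (s := Finset.range (p^e)) (p := fun c => p ∣ c)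
    rw [multiples_card p e hp.pos he, Finset.card_range] at h1
    omega
  omega

lemma sqSet_step (p m : ℕ) (hp : 0 < p) :
    sqSet p (m+2) ⊆ usqSet p (m+2) ∪ (sqSet p m).image (fun t => p^2 * t) := by
  intro x hx
  obtain ⟨c, hc, rfl⟩ := Finset.mem_image.mp hx
  have hcr : c < p^(m+2) := Finset.mem_range.mp hc
  by_cases hd : p ∣ c
  · obtain ⟨d, rfl⟩ := hd
    apply Finset.mem_union_right
    apply Finset.mem_image.mpr
    refine ⟨d^2 % p^m, ?_, ?_⟩
    · apply Finset.mem_image.mpr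
      refine ⟨d % p^m, Finset.mem_range.mpr (Nat.mod_lt _ (pow_pos hp m)), ?_⟩
      exact (Nat.pow_mod d 2 (p^m)).symm
    · symm
      have h1 : (p*d)^2 = p^(m+2) * (d^2 / p^m) + p^2 * (d^2 % p^m) := by
        have := Nat.div_add_mod (d^2) (p^m)
        calc (p*d)^2 = p^2 * (p^m * (d^2 / p^m) + d^2 % p^m) := by rw [this]; ring
          _ = p^(m+2) * (d^2 / p^m) + p^2 * (d^2 % p^m) := by ring
      rw [h1, Nat.mul_add_mod]
      apply Nat.mod_eq_of_lt
      have : d^2 % p^m < p^m := Nat.mod_lt _ (pow_pos hp m)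
      calc p^2 * (d^2 % p^m) < p^2 * p^m := by
            exact (Nat.mul_lt_mul_left (pow_pos hp 2)).mpr this
        _ = p^(m+2) := by ring
  · apply Finset.mem_union_left
    exact Finset.mem_image.mpr ⟨c, Finset.mem_filter.mpr ⟨hc, hd⟩, rfl⟩

lemma sqSet_zero_card (p : ℕ) : (sqSet p 0).card ≤ 1 := by
  unfold sqSet
  calc ((Finset.range (p^0)).image _).card ≤ (Finset.range (p^0)).card :=
        Finset.card_image_le
    _ = 1 := by rw [Finset.card_range, pow_zero]

lemma sqSet_one (p : ℕ) (hp : 0 < p) : sqSet p 1 ⊆ insert 0 (usqSet p 1) := by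
  intro x hx
  obtain ⟨c, hc, rfl⟩ := Finset.mem_image.mp hx
  have hcr : c < p^1 := Finset.mem_range.mp hc
  by_cases hd : p ∣ c
  · have hc0 : c = 0 := Nat.eq_zero_of_dvd_of_lt hd (by rwa [pow_one] at hcr)
    simp [hc0]
  · exact Finset.mem_insert_of_mem (Finset.mem_image.mpr ⟨c, Finset.mem_filter.mpr ⟨hc, hd⟩, rfl⟩)

lemma sqSet_card_bound (p : ℕ) (hp : p.Prime) (hp2 : p ≠ 2) : ∀ m : ℕ,
    ((sqSet p m).card : ℚ) ≤
      (if Even m then ((p:ℚ)^(m+1) + p + 2) else ((p:ℚ)^(m+1) + 2*p + 1)) / (2*p+2) := by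
  have hp0 : 0 < p := hp.pos
  have hp1 : (1:ℚ) ≤ (p:ℚ) := by exact_mod_cast hp0
  have hden : (0:ℚ) < 2*(p:ℚ)+2 := by linarith
  intro m
  induction m using Nat.twoStepInduction with
  | zero =>
    have hne : (2*(p:ℚ)+2) ≠ 0 := ne_of_gt hden
    simp only [Even.zero, if_true]
    calc ((sqSet p 0).card : ℚ) ≤ 1 := by exact_mod_cast sqSet_zero_card p
      _ = ((p:ℚ)^(0+1) + p + 2) / (2*p+2) := by rw [eq_div_iff hne]; ring
  | one =>
    have hne : (2*(p:ℚ)+2) ≠ 0 := ne_of_gt hden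
    have h1 : (sqSet p 1).card ≤ (usqSet p 1).card + 1 :=
      le_trans (Finset.card_le_card (sqSet_one p hp0)) (Finset.card_insert_le _ _)
    have h2 : 2 * (usqSet p 1).card ≤ p^1 - p^0 := usq_two_mul_card p 1 hp hp2 le_rfl
    have h2' : ((usqSet p 1).card : ℚ) ≤ ((p:ℚ) - 1) / 2 := by
      have : ((2 * (usqSet p 1).card : ℕ) : ℚ) ≤ ((p^1 - p^0 : ℕ) : ℚ) := by exact_mod_cast h2
      rw [Nat.cast_sub (by simpa using Nat.one_le_iff_ne_zero.mpr (by positivity))] at this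
      push_cast at this
      linarith
    have : ((sqSet p 1).card : ℚ) ≤ 1 + ((p:ℚ) - 1)/2 := by
      have hc : ((sqSet p 1).card : ℚ) ≤ ((usqSet p 1).card : ℚ) + 1 := by exact_mod_cast h1
      linarith
    rw [if_neg (by decide : ¬ Even 1)]
    calc ((sqSet p 1).card : ℚ) ≤ 1 + ((p:ℚ)-1)/2 := this
      _ = ((p:ℚ)^(1+1) + 2*p + 1)/(2*p+2) := by
          rw [eq_div_iff hne]; ring
  | more m ih ih1 =>
    have hne : (2*(p:ℚ)+2) ≠ 0 := ne_of_gt hden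
    have hstep := sqSet_step p m hp0
    have hcard : (sqSet p (m+2)).card ≤ (usqSet p (m+2)).card + (sqSet p m).card := by
      calc (sqSet p (m+2)).card ≤ (usqSet p (m+2) ∪ (sqSet p m).image (fun t => p^2 * t)).card :=
            Finset.card_le_card hstep
        _ ≤ (usqSet p (m+2)).card + ((sqSet p m).image (fun t => p^2 * t)).card :=
            Finset.card_union_le _ _
        _ ≤ (usqSet p (m+2)).card + (sqSet p m).card := by
            exact Nat.add_le_add_left Finset.card_image_le _
    have husq : 2 * (usqSet p (m+2)).card ≤ p^(m+2) - p^(m+1) :=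
      usq_two_mul_card p (m+2) hp hp2 (by omega)
    have husq' : ((usqSet p (m+2)).card : ℚ) ≤ ((p:ℚ)^(m+2) - (p:ℚ)^(m+1)) / 2 := by
      have : ((2 * (usqSet p (m+2)).card : ℕ) : ℚ) ≤ ((p^(m+2) - p^(m+1) : ℕ) : ℚ) := by
        exact_mod_cast husq
      rw [Nat.cast_sub (Nat.pow_le_pow_right hp0 (by omega))] at this
      push_cast at this
      linarith
    have heven : Even (m+2) ↔ Even m := by
      constructor
      · intro h; rcases h with ⟨t, ht⟩; exact ⟨t-1, by omega⟩
      · intro h; rcases h with ⟨t, ht⟩; exact ⟨t+1, by omega⟩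
    by_cases hev : Even m
    · rw [if_pos hev] at ih
      rw [if_pos (heven.mpr hev)]
      have : ((sqSet p (m+2)).card : ℚ)
          ≤ ((p:ℚ)^(m+2) - (p:ℚ)^(m+1))/2 + ((p:ℚ)^(m+1) + p + 2)/(2*p+2) := by
        calc ((sqSet p (m+2)).card : ℚ)
            ≤ ((usqSet p (m+2)).card : ℚ) + ((sqSet p m).card : ℚ) := by exact_mod_cast hcard
          _ ≤ _ := by linarith
      calc ((sqSet p (m+2)).card : ℚ) ≤ _ := this
        _ = ((p:ℚ)^(m+2+1) + p + 2)/(2*p+2) := by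
            rw [div_add_div _ _ (two_ne_zero) hne, div_eq_div_iff (by positivity) hne]
            ring
    · rw [if_neg hev] at ih
      rw [if_neg (fun h => hev (heven.mp h))]
      have : ((sqSet p (m+2)).card : ℚ)
          ≤ ((p:ℚ)^(m+2) - (p:ℚ)^(m+1))/2 + ((p:ℚ)^(m+1) + 2*p + 1)/(2*p+2) := by
        calc ((sqSet p (m+2)).card : ℚ)
            ≤ ((usqSet p (m+2)).card : ℚ) + ((sqSet p m).card : ℚ) := by exact_mod_cast hcard
          _ ≤ _ := by linarith
      calc ((sqSet p (m+2)).card : ℚ) ≤ _ := this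
        _ = ((p:ℚ)^(m+2+1) + 2*p + 1)/(2*p+2) := by
            rw [div_add_div _ _ (two_ne_zero) hne, div_eq_div_iff (by positivity) hne]
            ring

end StmtAux12

/-- bound on the number of non-represented values in an arithmetic
progression for a diagonal `p`-stable ternary lattice. -/
theorem stmt_12 (p : ℕ) [Fact (Nat.Prime p)] (hodd : Odd p)
    (u : ℤ) (hu : 0 < u) (hup : IsCoprime u (p : ℤ)) (v : ℤ)
    (a : Fin 3 → ℤ) (ha : ∀ i, 0 < a i) (hstable : IsPStable p a)
    (s : ℕ) (hs : 0 < s) :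
    ({n : ℤ | 1 ≤ n ∧ n ≤ (p : ℤ) ^ s ∧ ¬ diagRep p a (u * n + v)}.ncard : ℚ) ≤
      if Odd s then ((p : ℚ) ^ s + p + 2) / (2 * p + 2)
      else ((p : ℚ) ^ s + 2 * p + 1) / (2 * p + 2) := by
  classical
  have hp : Fact (Nat.Prime p) := inferInstance
  have hp2 : p ≠ 2 := by rintro rfl; revert hodd; decide
  have hppos : 0 < p := hp.out.pos
  have hp1 : (1:ℚ) ≤ (p:ℚ) := by exact_mod_cast hppos
  have hden : (0:ℚ) < 2*(p:ℚ)+2 := by linarith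
  set S : Set ℤ := {n : ℤ | 1 ≤ n ∧ n ≤ (p : ℤ) ^ s ∧ ¬ diagRep p a (u * n + v)} with hS
  rcases hstable with ⟨uu, vv, huu, hvv, huv⟩ |
    ⟨Δ, ε, hΔ, uu, vv, ww, huu, hvv, hww, huv, huw, hvw, -⟩
  · have hempty : S = ∅ := by
      apply Set.eq_empty_iff_forall_notMem.mpr
      intro n hn
      exact hn.2.2 (StmtAux12.rep_of_hyperbolic hp2 a uu vv huu hvv huv _)
    rw [hempty]
    simp only [Set.ncard_empty, Nat.cast_zero]
    split_ifs <;> positivity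
  · set m := s - 1 with hm
    have hs1 : s = m + 1 := by omega
    haveI : NeZero (p^m) := ⟨pow_ne_zero m hp.out.ne_zero⟩
    set W : ℕ := ((PadicInt.toZModPow m ((Δ:ℤ_[p]) * (ε:ℤ_[p]))).val) with hWdef
    obtain ⟨z1, hz1⟩ : ∃ z : ℤ_[p], (Δ:ℤ_[p]) * (ε:ℤ_[p]) - (W:ℤ_[p]) = (p:ℤ_[p])^m * z := by
      have h1 : ((Δ:ℤ_[p]) * (ε:ℤ_[p]) - (W:ℤ_[p])) ∈ RingHom.ker (PadicInt.toZModPow m) := by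
        rw [RingHom.mem_ker, map_sub, map_natCast, hWdef, ZMod.natCast_zmod_val, sub_self]
      rw [PadicInt.ker_toZModPow, Ideal.mem_span_singleton] at h1
      obtain ⟨z, hz⟩ := h1
      exact ⟨z, hz⟩
    set F : ℤ → ℤ := fun n => (u * n + v) % ((p:ℤ)^s) with hF
    set g : ℕ → ℤ := fun t => ((p:ℤ) * (W:ℤ) * (t:ℤ)) % ((p:ℤ)^s) with hg
    have hmem : ∀ n ∈ S, F n ∈ ((StmtAux12.sqSet p m).image g : Finset ℤ) := by
      intro n hn
      obtain ⟨γ, hγ⟩ := StmtAux12.rep_or_S hp2 a Δ ε hΔ uu vv ww huu hvv hww huv huw hvw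
        (u*n+v) hn.2.2
      set c : ℕ := (PadicInt.toZModPow m γ).val with hcdef
      have hclt : c < p^m := ZMod.val_lt _
      obtain ⟨z2, hz2⟩ : ∃ z : ℤ_[p], γ - (c:ℤ_[p]) = (p:ℤ_[p])^m * z := by
        have h1 : (γ - (c:ℤ_[p])) ∈ RingHom.ker (PadicInt.toZModPow m) := by
          rw [RingHom.mem_ker, map_sub, map_natCast, hcdef, ZMod.natCast_zmod_val, sub_self]
        rw [PadicInt.ker_toZModPow, Ideal.mem_span_singleton] at h1
        exact h1
      have hXpadic : ((u*n+v - (p:ℤ)*(W:ℤ)*(c:ℤ)^2 : ℤ) : ℤ_[p])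
          = (p:ℤ_[p])^s * (z1 * γ^2 + (W:ℤ_[p]) * z2 * (γ + (c:ℤ_[p]))) := by
        push_cast
        rw [hs1]
        push_cast at hγ
        linear_combination hγ + (p:ℤ_[p]) * γ^2 * hz1
          + (p:ℤ_[p]) * (W:ℤ_[p]) * (γ + (c:ℤ_[p])) * hz2
      have hdvd : ((p:ℤ)^s) ∣ (u*n+v - (p:ℤ)*(W:ℤ)*(c:ℤ)^2) := by
        have h0 : ((u*n+v - (p:ℤ)*(W:ℤ)*(c:ℤ)^2 : ℤ) : ZMod (p^s)) = 0 := by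
          have hmap := map_intCast (PadicInt.toZModPow (p := p) s)
            (u*n+v - (p:ℤ)*(W:ℤ)*(c:ℤ)^2)
          rw [← hmap, hXpadic, map_mul, map_pow, map_natCast]
          have hps : ((p : ZMod (p^s)))^s = 0 := by
            rw [← Nat.cast_pow, ZMod.natCast_self]
          rw [hps, zero_mul]
        have hdd := (ZMod.intCast_zmod_eq_zero_iff_dvd _ (p^s)).mp h0
        push_cast at hdd
        exact hdd
      obtain ⟨q, hq⟩ : ∃ q : ℕ, c^2 = p^m * q + c^2 % p^m :=
        ⟨_, (Nat.div_add_mod _ _).symm⟩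
      have hdm : (c:ℤ)^2 = ((p:ℤ)^m) * (q:ℤ) + ((c^2 % p^m : ℕ):ℤ) := by
        have h0 := congrArg (fun x : ℕ => (x:ℤ)) hq
        simpa only [Nat.cast_add, Nat.cast_mul, Nat.cast_pow] using h0
      have hFn : F n = g (c^2 % p^m) := by
        show (u*n+v) % ((p:ℤ)^s) = ((p:ℤ)*(W:ℤ)*((c^2 % p^m : ℕ):ℤ)) % ((p:ℤ)^s)
        have mod1 : Int.ModEq ((p:ℤ)^s) (u*n+v) ((p:ℤ)*(W:ℤ)*(c:ℤ)^2) := by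
          rw [Int.modEq_iff_dvd]
          have hneg : ((p:ℤ)^s) ∣ -(u*n+v - (p:ℤ)*(W:ℤ)*(c:ℤ)^2) := dvd_neg.mpr hdvd
          simpa [neg_sub] using hneg
        have mod2 : Int.ModEq ((p:ℤ)^s) ((p:ℤ)*(W:ℤ)*(c:ℤ)^2)
            ((p:ℤ)*(W:ℤ)*((c^2 % p^m : ℕ):ℤ)) := by
          rw [Int.modEq_iff_dvd, hs1]
          refine ⟨-((W:ℤ) * (q:ℤ)), ?_⟩
          linear_combination (-(p:ℤ)*(W:ℤ)) * hdm
        exact mod1.trans mod2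
      apply Finset.mem_image.mpr
      refine ⟨c^2 % p^m, ?_, hFn.symm⟩
      exact Finset.mem_image.mpr ⟨c, Finset.mem_range.mpr hclt, rfl⟩
    have hinj : Set.InjOn F S := by
      intro n hn n' hn' hFe
      have hmod : Int.ModEq ((p:ℤ)^s) (u*n+v) (u*n'+v) := hFe
      have hdvd : ((p:ℤ)^s) ∣ (u*(n' - n)) := by
        have hd := Int.ModEq.dvd hmod
        have h2 : (u*n'+v) - (u*n+v) = u*(n'-n) := by ring
        rwa [h2] at hd
      have hcop : IsCoprime ((p:ℤ)^s) u := (hup.symm).pow_left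
      have hdvd2 : ((p:ℤ)^s) ∣ (n' - n) := hcop.dvd_of_dvd_mul_left hdvd
      have hb : |n' - n| < (p:ℤ)^s := by
        rw [abs_lt]
        obtain ⟨h1, h2, -⟩ := hn
        obtain ⟨h1', h2', -⟩ := hn'
        constructor <;> linarith
      have h0 := Int.eq_zero_of_abs_lt_dvd hdvd2 hb
      have : n' = n := by linarith [sub_eq_zero.mp h0]
      omega
    have hfin : S.Finite := Set.Finite.subset (Set.finite_Icc 1 ((p:ℤ)^s))
      (fun n hn => Set.mem_Icc.mpr ⟨hn.1, hn.2.1⟩)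
    have hc1 : S.ncard = (F '' S).ncard := (Set.ncard_image_of_injOn hinj).symm
    have hc2 : (F '' S).ncard ≤ ((StmtAux12.sqSet p m).image g).card := by
      have hsub : (F '' S) ⊆ ↑((StmtAux12.sqSet p m).image g) := by
        rintro x ⟨n, hn, rfl⟩
        exact hmem n hn
      calc (F '' S).ncard ≤ (↑((StmtAux12.sqSet p m).image g) : Set ℤ).ncard :=
            Set.ncard_le_ncard hsub (Finset.finite_toSet _)
        _ = ((StmtAux12.sqSet p m).image g).card := Set.ncard_coe_finset _
    have hc3 : ((StmtAux12.sqSet p m).image g).card ≤ (StmtAux12.sqSet p m).card :=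
      Finset.card_image_le
    have hq := StmtAux12.sqSet_card_bound p hp.out hp2 m
    have hcard : S.ncard ≤ (StmtAux12.sqSet p m).card := by
      rw [hc1]; exact le_trans hc2 hc3
    have hcardq : (S.ncard : ℚ) ≤
        (if Even m then ((p:ℚ)^(m+1) + p + 2) else ((p:ℚ)^(m+1)+2*p+1))/(2*p+2) := by
      calc (S.ncard : ℚ) ≤ ((StmtAux12.sqSet p m).card : ℚ) := by exact_mod_cast hcard
        _ ≤ _ := hq
    have hparity : Odd s ↔ Even m := by
      rw [hs1, Nat.odd_add_one, Nat.not_odd_iff_even]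
    by_cases hos : Odd s
    · rw [if_pos hos]
      rw [if_pos (hparity.mp hos), ← hs1] at hcardq
      exact hcardq
    · rw [if_neg hos]
      rw [if_neg (fun h => hos (hparity.mpr h)), ← hs1] at hcardq
      exact hcardq
end

section
/- Let K be a 2-stable diagonal ternary ℤ-lattice, u an odd integer, and l any integer. Then there exists ν ∈ {0,1,2} such that u(4n+ν)+l is represented by K over ℤ₂ for every integer n. -/
open scoped BigOperators

/-- 2-stability of the diagonal ternary lattice `⟨a 0, a 1, a 2⟩`:
`K₂` is unimodular, or `⟨1,3⟩ → K₂`, or `⟨1,7⟩ → K₂`. -/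
def Is2Stable (a : Fin 3 → ℤ) : Prop :=
  (IsUnit ((a 0 * a 1 * a 2 : ℤ) : ℤ_[2])) ∨
  (∃ u v : Fin 3 → ℤ_[2],
      diagB 2 a u u = 1 ∧ diagB 2 a v v = 3 ∧ diagB 2 a u v = 0) ∨
  (∃ u v : Fin 3 → ℤ_[2],
      diagB 2 a u u = 1 ∧ diagB 2 a v v = 7 ∧ diagB 2 a u v = 0)


/-! ### Auxiliary lemmas -/

lemma unit_of_odd {n : ℤ} (hn : Odd n) : IsUnit ((n : ℤ_[2])) := by
  rw [PadicInt.isUnit_iff]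
  have h1 : ‖(n : ℤ_[2])‖ ≤ 1 := PadicInt.norm_le_one _
  have h2 : ¬ ‖(n : ℤ_[2])‖ < 1 := by
    rw [PadicInt.norm_int_lt_one_iff_dvd]
    obtain ⟨k, hk⟩ := hn
    intro hdvd
    have h3 : ((2:ℕ):ℤ) = 2 := by norm_num
    rw [h3] at hdvd
    omega
  linarith

lemma odd_of_unit {n : ℤ} (h : IsUnit ((n : ℤ_[2]))) : Odd n := by
  by_contra hodd
  have h2 : ((2:ℕ):ℤ) ∣ n := by
    rw [Int.not_odd_iff_even] at hodd
    exact_mod_cast hodd.two_dvd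
  have h3 := (PadicInt.norm_int_lt_one_iff_dvd n).2 h2
  rw [PadicInt.isUnit_iff] at h
  linarith

lemma dvd_cast2 {m : ℤ} (h : (8:ℤ) ∣ m) : (8:ℤ_[2]) ∣ (m : ℤ_[2]) := by
  obtain ⟨k, hk⟩ := h
  exact ⟨(k : ℤ_[2]), by rw [hk]; push_cast; ring⟩

lemma isSquare_of_eight_dvd {t : ℤ_[2]} (h : (8:ℤ_[2]) ∣ (t - 1)) : IsSquare t := by
  set F : Polynomial ℤ_[2] := Polynomial.X ^ 2 - Polynomial.C t with hF
  have heval : F.eval 1 = 1 - t := by simp [hF]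
  have hd : F.derivative.eval 1 = 2 := by
    simp [hF, Polynomial.derivative_X_pow]; norm_num
  have hnp : ‖(2 : ℤ_[2])‖ = (1:ℝ)/2 := by
    have := @PadicInt.norm_p 2 _
    norm_num at this ⊢
    exact this
  have h8 : ‖(8 : ℤ_[2])‖ = (1:ℝ)/8 := by
    have h83 : (8 : ℤ_[2]) = 2*2*2 := by norm_num
    rw [h83, norm_mul, norm_mul, hnp]
    norm_num
  have hnorm : ‖F.eval 1‖ < ‖F.derivative.eval 1‖ ^ 2 := by
    rw [heval, hd, hnp]
    obtain ⟨k, hk⟩ := h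
    have h1t : (1 : ℤ_[2]) - t = 8 * (-k) := by
      rw [show (8:ℤ_[2]) * -k = -(8*k) by ring, ← hk]; ring
    rw [h1t, norm_mul, h8]
    have hk1 : ‖(-k : ℤ_[2])‖ ≤ 1 := PadicInt.norm_le_one _
    nlinarith [norm_nonneg (-k : ℤ_[2])]
  obtain ⟨z, hz, -⟩ := hensels_lemma hnorm
  refine ⟨z, ?_⟩
  have h0 : z^2 - t = 0 := by simpa [hF] using hz
  have h1 : t = z^2 := by linear_combination -h0
  rw [h1]; ring

lemma adj {c x s N : ℤ_[2]} (hc : IsUnit c) (hx : IsUnit x)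
    (h : (8:ℤ_[2]) ∣ (N - (c * x ^ 2 + s))) : ∃ y : ℤ_[2], c * y ^ 2 + s = N := by
  obtain ⟨U, hU'⟩ := hc.mul (hx.pow 2)
  set t : ℤ_[2] := 1 + (N - (c * x ^ 2 + s)) * ↑U⁻¹ with hT
  have ht : (8:ℤ_[2]) ∣ (t - 1) := by
    have h1 : t - 1 = (N - (c * x ^ 2 + s)) * ↑U⁻¹ := by rw [hT]; ring
    rw [h1]; exact h.mul_right _
  obtain ⟨r, hr⟩ := isSquare_of_eight_dvd ht
  refine ⟨x * r, ?_⟩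
  have hUt : c * x ^ 2 * t = c * x ^ 2 + (N - (c * x ^ 2 + s)) := by
    rw [hT]
    have h1 : (U : ℤ_[2]) * ↑U⁻¹ = 1 := by
      rw [← Units.val_mul, mul_inv_cancel, Units.val_one]
    calc c * x ^ 2 * (1 + (N - (c * x ^ 2 + s)) * ↑U⁻¹)
        = c * x ^ 2 + (N - (c * x ^ 2 + s)) * ((U:ℤ_[2]) * ↑U⁻¹) := by rw [hU']; ring
      _ = c * x ^ 2 + (N - (c * x ^ 2 + s)) := by rw [h1]; ring
  calc c * (x * r) ^ 2 + s = c * x ^ 2 * (r * r) + s := by ring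
    _ = c * x ^ 2 * t + s := by rw [← hr]
    _ = N := by rw [hUt]; ring

lemma keyRep (a : Fin 3 → ℤ) (j : Fin 3) (hj : Odd (a j)) (x : Fin 3 → ℤ) (hx : Odd (x j)) (N : ℤ)
    (h : (8:ℤ) ∣ (N - (a 0 * (x 0)^2 + a 1 * (x 1)^2 + a 2 * (x 2)^2))) : diagRep 2 a N := by
  have hdvd : (8:ℤ_[2]) ∣ ((N:ℤ_[2]) -
      ((a 0 : ℤ_[2]) * (x 0 : ℤ_[2])^2 + (a 1 : ℤ_[2]) * (x 1 : ℤ_[2])^2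
        + (a 2 : ℤ_[2]) * (x 2 : ℤ_[2])^2)) := by
    have h2 := dvd_cast2 h
    push_cast at h2
    convert h2 using 1 <;> ring
  fin_cases j
  · obtain ⟨y, hy⟩ := adj (c := (a 0 : ℤ_[2])) (x := (x 0 : ℤ_[2]))
      (s := (a 1 : ℤ_[2]) * (x 1 : ℤ_[2])^2 + (a 2 : ℤ_[2]) * (x 2 : ℤ_[2])^2)
      (unit_of_odd hj) (unit_of_odd hx) (by convert hdvd using 2; ring)
    exact ⟨![y, (x 1 : ℤ_[2]), (x 2 : ℤ_[2])], by
      rw [Fin.sum_univ_three]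
      simp only [Matrix.cons_val_zero, Matrix.cons_val_one, Matrix.head_cons,
        Matrix.cons_val_two, Matrix.tail_cons]
      linear_combination hy⟩
  · obtain ⟨y, hy⟩ := adj (c := (a 1 : ℤ_[2])) (x := (x 1 : ℤ_[2]))
      (s := (a 0 : ℤ_[2]) * (x 0 : ℤ_[2])^2 + (a 2 : ℤ_[2]) * (x 2 : ℤ_[2])^2)
      (unit_of_odd hj) (unit_of_odd hx) (by convert hdvd using 2; ring)
    exact ⟨![(x 0 : ℤ_[2]), y, (x 2 : ℤ_[2])], by
      rw [Fin.sum_univ_three]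
      simp only [Matrix.cons_val_zero, Matrix.cons_val_one, Matrix.head_cons,
        Matrix.cons_val_two, Matrix.tail_cons]
      linear_combination hy⟩
  · obtain ⟨y, hy⟩ := adj (c := (a 2 : ℤ_[2])) (x := (x 2 : ℤ_[2]))
      (s := (a 0 : ℤ_[2]) * (x 0 : ℤ_[2])^2 + (a 1 : ℤ_[2]) * (x 1 : ℤ_[2])^2)
      (unit_of_odd hj) (unit_of_odd hx) (by convert hdvd using 2; ring)
    exact ⟨![(x 0 : ℤ_[2]), (x 1 : ℤ_[2]), y], by
      rw [Fin.sum_univ_three]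
      simp only [Matrix.cons_val_zero, Matrix.cons_val_one, Matrix.head_cons,
        Matrix.cons_val_two, Matrix.tail_cons]
      linear_combination hy⟩

lemma classRep (a : Fin 3 → ℤ) (hodd : ∀ i, Odd (a i)) (j : Fin 3) (N : ℤ)
    (h : (4:ℤ) ∣ (N - a j)) : diagRep 2 a N := by
  obtain ⟨k0, h0⟩ := hodd 0
  obtain ⟨k1, h1⟩ := hodd 1
  obtain ⟨k2, h2⟩ := hodd 2
  fin_cases j
  · have hc : (8:ℤ) ∣ (N - (a 0 * 1^2 + a 1 * 0^2 + a 2 * 0^2)) ∨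
        (8:ℤ) ∣ (N - (a 0 * 1^2 + a 1 * 2^2 + a 2 * 0^2)) := by
      have h' : (4:ℤ) ∣ (N - a 0) := h; omega
    rcases hc with hc | hc
    · exact keyRep a 0 (hodd 0) ![1, 0, 0] (by norm_num) N (by simpa using hc)
    · exact keyRep a 0 (hodd 0) ![1, 2, 0] (by norm_num) N (by simpa using hc)
  · have hc : (8:ℤ) ∣ (N - (a 0 * 0^2 + a 1 * 1^2 + a 2 * 0^2)) ∨
        (8:ℤ) ∣ (N - (a 0 * 2^2 + a 1 * 1^2 + a 2 * 0^2)) := by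
      have h' : (4:ℤ) ∣ (N - a 1) := h; omega
    rcases hc with hc | hc
    · exact keyRep a 1 (hodd 1) ![0, 1, 0] (by norm_num) N (by simpa using hc)
    · exact keyRep a 1 (hodd 1) ![2, 1, 0] (by norm_num) N (by simpa using hc)
  · have hc : (8:ℤ) ∣ (N - (a 0 * 0^2 + a 1 * 0^2 + a 2 * 1^2)) ∨
        (8:ℤ) ∣ (N - (a 0 * 2^2 + a 1 * 0^2 + a 2 * 1^2)) := by
      have h' : (4:ℤ) ∣ (N - a 2) := h; omega
    rcases hc with hc | hc
    · exact keyRep a 2 (hodd 2) ![0, 0, 1] ⟨0, rfl⟩ N (by simpa using hc)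
    · exact keyRep a 2 (hodd 2) ![2, 0, 1] ⟨0, rfl⟩ N (by simpa using hc)

lemma evenRep (a : Fin 3 → ℤ) (hodd : ∀ i, Odd (a i)) (N : ℤ)
    (h : (4:ℤ) ∣ (N - (a 0 + a 1))) : diagRep 2 a N := by
  obtain ⟨k0, h0⟩ := hodd 0
  obtain ⟨k1, h1⟩ := hodd 1
  obtain ⟨k2, h2⟩ := hodd 2
  have hc : (8:ℤ) ∣ (N - (a 0 * 1^2 + a 1 * 1^2 + a 2 * 0^2)) ∨
      (8:ℤ) ∣ (N - (a 0 * 1^2 + a 1 * 1^2 + a 2 * 2^2)) := by omega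
  rcases hc with hc | hc
  · exact keyRep a 0 (hodd 0) ![1, 1, 0] (by norm_num) N (by simpa using hc)
  · exact keyRep a 0 (hodd 0) ![1, 1, 2] (by norm_num) N (by simpa using hc)

lemma finishCls (a : Fin 3 → ℤ) (hodd : ∀ i, Odd (a i)) (u l : ℤ) (ν : ℕ)
    (h : (4:ℤ) ∣ (u*(ν:ℤ)+l - a 0) ∨ (4:ℤ) ∣ (u*(ν:ℤ)+l - a 1) ∨
         (4:ℤ) ∣ (u*(ν:ℤ)+l - a 2) ∨ (4:ℤ) ∣ (u*(ν:ℤ)+l - (a 0 + a 1))) :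
    ∀ n : ℤ, diagRep 2 a (u * (4*n + (ν:ℤ)) + l) := by
  intro n
  rcases h with h|h|h|h
  · exact classRep a hodd 0 _ (by obtain ⟨c, hc⟩ := h; exact ⟨u*n + c, by linear_combination hc⟩)
  · exact classRep a hodd 1 _ (by obtain ⟨c, hc⟩ := h; exact ⟨u*n + c, by linear_combination hc⟩)
  · exact classRep a hodd 2 _ (by obtain ⟨c, hc⟩ := h; exact ⟨u*n + c, by linear_combination hc⟩)
  · exact evenRep a hodd _ (by obtain ⟨c, hc⟩ := h; exact ⟨u*n + c, by linear_combination hc⟩)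

lemma binRep (a : Fin 3 → ℤ) (c : ℤ_[2]) (w v : Fin 3 → ℤ_[2])
    (huu : diagB 2 a w w = 1) (hvv : diagB 2 a v v = c) (huv : diagB 2 a w v = 0)
    (N : ℤ) (α β : ℤ_[2]) (hab : α ^ 2 + c * β ^ 2 = (N : ℤ_[2])) : diagRep 2 a N := by
  refine ⟨fun i => α * w i + β * v i, ?_⟩
  unfold diagB at huu hvv huv
  rw [Fin.sum_univ_three] at huu hvv huv ⊢
  linear_combination α^2 * huu + β^2 * hvv + 2*α*β*huv + hab

lemma binSolveA (c0 : ℤ) (N α0 β0 : ℤ) (hα : Odd α0)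
    (h : (8:ℤ) ∣ (N - (α0^2 + c0 * β0^2))) :
    ∃ α β : ℤ_[2], α ^ 2 + (c0:ℤ_[2]) * β ^ 2 = (N:ℤ_[2]) := by
  obtain ⟨y, hy⟩ := adj (c := (1:ℤ_[2])) (x := (α0:ℤ_[2])) (s := (c0:ℤ_[2]) * (β0:ℤ_[2])^2)
    isUnit_one (unit_of_odd hα)
    (by have h2 := dvd_cast2 h; push_cast at h2; convert h2 using 2 <;> ring)
  exact ⟨y, (β0:ℤ_[2]), by linear_combination hy⟩

lemma binSolveB (c0 : ℤ) (hc : Odd c0) (N α0 β0 : ℤ) (hβ : Odd β0)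
    (h : (8:ℤ) ∣ (N - (α0^2 + c0 * β0^2))) :
    ∃ α β : ℤ_[2], α ^ 2 + (c0:ℤ_[2]) * β ^ 2 = (N:ℤ_[2]) := by
  obtain ⟨y, hy⟩ := adj (c := (c0:ℤ_[2])) (x := (β0:ℤ_[2])) (s := ((α0:ℤ_[2]))^2)
    (unit_of_odd hc) (unit_of_odd hβ)
    (by have h2 := dvd_cast2 h; push_cast at h2; convert h2 using 2 <;> ring)
  exact ⟨(α0:ℤ_[2]), y, by linear_combination hy⟩

lemma binAll (c0 : ℤ) (hc : c0 = 3 ∨ c0 = 7) (N : ℤ) (hN : Odd N) :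
    ∃ α β : ℤ_[2], α ^ 2 + (c0:ℤ_[2]) * β ^ 2 = (N:ℤ_[2]) := by
  obtain ⟨k, hk⟩ := hN
  rcases hc with rfl | rfl
  · have h : (8:ℤ) ∣ (N - (1^2 + 3*0^2)) ∨ (8:ℤ) ∣ (N - (1^2 + 3*2^2)) ∨
        (8:ℤ) ∣ (N - (0^2 + 3*1^2)) ∨ (8:ℤ) ∣ (N - (2^2 + 3*1^2)) := by omega
    rcases h with h|h|h|h
    · exact binSolveA 3 N 1 0 (by norm_num) h
    · exact binSolveA 3 N 1 2 (by norm_num) h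
    · exact binSolveB 3 ⟨1, by norm_num⟩ N 0 1 (by norm_num) h
    · exact binSolveB 3 ⟨1, by norm_num⟩ N 2 1 (by norm_num) h
  · have h : (8:ℤ) ∣ (N - (1^2 + 7*0^2)) ∨ (8:ℤ) ∣ (N - (1^2 + 7*2^2)) ∨
        (8:ℤ) ∣ (N - (0^2 + 7*1^2)) ∨ (8:ℤ) ∣ (N - (2^2 + 7*1^2)) := by omega
    rcases h with h|h|h|h
    · exact binSolveA 7 N 1 0 (by norm_num) h
    · exact binSolveA 7 N 1 2 (by norm_num) h
    · exact binSolveB 7 ⟨3, by norm_num⟩ N 0 1 (by norm_num) h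
    · exact binSolveB 7 ⟨3, by norm_num⟩ N 2 1 (by norm_num) h

lemma binCase (a : Fin 3 → ℤ) (c0 : ℤ) (hc : c0 = 3 ∨ c0 = 7)
    (w v : Fin 3 → ℤ_[2]) (huu : diagB 2 a w w = 1) (hvv : diagB 2 a v v = (c0:ℤ_[2]))
    (huv : diagB 2 a w v = 0) (u : ℤ) (hu : Odd u) (l : ℤ) :
    ∃ ν : ℕ, ν ≤ 2 ∧ ∀ n : ℤ, diagRep 2 a (u * (4 * n + ν) + l) := by
  obtain ⟨p, hp⟩ := hu
  by_cases hl : Odd l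
  · obtain ⟨m, hm⟩ := hl
    refine ⟨0, by norm_num, fun n => ?_⟩
    obtain ⟨α, β, hs⟩ := binAll c0 hc (u * (4*n + ((0:ℕ):ℤ)) + l) ⟨2*(u*n) + m, by push_cast; linarith [hp, hm]⟩
    exact binRep a (c0:ℤ_[2]) w v huu hvv huv _ α β hs
  · rw [Int.not_odd_iff_even] at hl
    obtain ⟨m, hm⟩ := hl
    refine ⟨1, by norm_num, fun n => ?_⟩
    obtain ⟨α, β, hs⟩ := binAll c0 hc (u * (4*n + ((1:ℕ):ℤ)) + l) ⟨2*(u*n) + p + m, by push_cast; linarith [hp, hm]⟩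
    exact binRep a (c0:ℤ_[2]) w v huu hvv huv _ α β hs

/-- for a 2-stable diagonal ternary lattice `K`, odd `u` and any `l`,
some residue class `u(4n+ν)+l`, `ν ∈ {0,1,2}`, is entirely represented by `K` over `ℤ₂`. -/
theorem stmt_13 (a : Fin 3 → ℤ) (ha : ∀ i, 0 < a i) (hst : Is2Stable a)
    (u : ℤ) (hu : Odd u) (l : ℤ) :
    ∃ ν : ℕ, ν ≤ 2 ∧ ∀ n : ℤ, diagRep 2 a (u * (4 * n + ν) + l) := by
  rcases hst with hun | hbin | hbin
  · -- unimodular case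
    have hprod : Odd (a 0 * a 1 * a 2) := odd_of_unit hun
    have hodd : ∀ i, Odd (a i) := by
      rw [Int.odd_mul, Int.odd_mul] at hprod
      intro i; fin_cases i
      · exact hprod.1.1
      · exact hprod.1.2
      · exact hprod.2
    obtain ⟨ku, hku⟩ := hu
    obtain ⟨k0, h0⟩ := hodd 0
    obtain ⟨k1, h1⟩ := hodd 1
    obtain ⟨k2, h2⟩ := hodd 2
    have big :
        ((4:ℤ) ∣ (u*((0:ℕ):ℤ)+l - a 0) ∨ (4:ℤ) ∣ (u*((0:ℕ):ℤ)+l - a 1) ∨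
         (4:ℤ) ∣ (u*((0:ℕ):ℤ)+l - a 2) ∨ (4:ℤ) ∣ (u*((0:ℕ):ℤ)+l - (a 0 + a 1))) ∨
        ((4:ℤ) ∣ (u*((1:ℕ):ℤ)+l - a 0) ∨ (4:ℤ) ∣ (u*((1:ℕ):ℤ)+l - a 1) ∨
         (4:ℤ) ∣ (u*((1:ℕ):ℤ)+l - a 2) ∨ (4:ℤ) ∣ (u*((1:ℕ):ℤ)+l - (a 0 + a 1))) ∨
        ((4:ℤ) ∣ (u*((2:ℕ):ℤ)+l - a 0) ∨ (4:ℤ) ∣ (u*((2:ℕ):ℤ)+l - a 1) ∨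
         (4:ℤ) ∣ (u*((2:ℕ):ℤ)+l - a 2) ∨ (4:ℤ) ∣ (u*((2:ℕ):ℤ)+l - (a 0 + a 1))) := by
      push_cast
      omega
    rcases big with h | h | h
    · exact ⟨0, by norm_num, finishCls a hodd u l 0 h⟩
    · exact ⟨1, by norm_num, finishCls a hodd u l 1 h⟩
    · exact ⟨2, by norm_num, finishCls a hodd u l 2 h⟩
  · -- ⟨1,3⟩ case
    obtain ⟨w, v, huu, hvv, huv⟩ := hbin
    exact binCase a 3 (Or.inl rfl) w v huu (by rw [hvv]; norm_num) huv u hu l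
  · -- ⟨1,7⟩ case
    obtain ⟨w, v, huu, hvv, huv⟩ := hbin
    exact binCase a 7 (Or.inr rfl) w v huu (by rw [hvv]; norm_num) huv u hu l
end

section
/- Let K be a diagonal ternary ℤ-lattice that is 2-stable and 3-stable, u an integer with gcd(u,6)=1, and l any integer. Then there exists ν ∈ {0,1,2,3,4} such that u(12n+ν)+l is represented by K over ℤ₂ and over ℤ₃ for every integer n. -/
open scoped BigOperators

section helpers
variable {p : ℕ} [hp : Fact (Nat.Prime p)]

lemma dvd_of_toZMod_eq_zero {x : ℤ_[p]} (h : PadicInt.toZMod x = 0) : (p : ℤ_[p]) ∣ x := by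
  have : x ∈ RingHom.ker (PadicInt.toZMod : ℤ_[p] →+* ZMod p) := h
  rw [PadicInt.ker_toZMod, PadicInt.maximalIdeal_eq_span_p, Ideal.mem_span_singleton] at this
  exact this

lemma toZMod_eq_zero_of_dvd {x : ℤ_[p]} (h : (p : ℤ_[p]) ∣ x) : PadicInt.toZMod x = 0 := by
  have : x ∈ RingHom.ker (PadicInt.toZMod : ℤ_[p] →+* ZMod p) := by
    rw [PadicInt.ker_toZMod, PadicInt.maximalIdeal_eq_span_p, Ideal.mem_span_singleton]
    exact h
  exact this

lemma unit_cast {m : ℤ} (h : ¬ (p:ℤ) ∣ m) : IsUnit ((m : ℤ) : ℤ_[p]) := by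
  rw [PadicInt.isUnit_iff]
  refine le_antisymm (PadicInt.norm_le_one _) ?_
  by_contra hlt
  exact h ((PadicInt.norm_int_lt_one_iff_dvd m).1 (lt_of_not_ge hlt))

lemma not_dvd_of_unit {m : ℤ} (h : IsUnit ((m : ℤ) : ℤ_[2])) : ¬ (2:ℤ) ∣ m := by
  intro hd
  have := (PadicInt.norm_int_lt_one_iff_dvd (p := 2) m).2 hd
  rw [PadicInt.isUnit_iff.1 h] at this
  exact lt_irrefl _ this

lemma isUnit_of_toZMod_ne_zero {x : ℤ_[p]} (h : PadicInt.toZMod x ≠ 0) : IsUnit x := by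
  by_contra hx
  have : x ∈ IsLocalRing.maximalIdeal ℤ_[p] := hx
  rw [PadicInt.maximalIdeal_eq_span_p, Ideal.mem_span_singleton] at this
  exact h (toZMod_eq_zero_of_dvd this)

lemma sq_of_hensel {c : ℤ_[p]} (h : ‖1 - c‖ < ‖(2 : ℤ_[p])‖ ^ 2) : ∃ t : ℤ_[p], t ^ 2 = c := by
  have h' : ‖Polynomial.eval 1 (Polynomial.X ^ 2 - Polynomial.C c)‖ <
      ‖Polynomial.eval 1 (Polynomial.derivative (Polynomial.X ^ 2 - Polynomial.C c))‖ ^ 2 := by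
    simpa [one_add_one_eq_two] using h
  obtain ⟨z, hz, -⟩ := hensels_lemma h'
  refine ⟨z, ?_⟩
  have := hz
  simp [Polynomial.eval_sub, Polynomial.eval_pow, sub_eq_zero] at this
  exact this

end helpers

lemma sq3 {c : ℤ_[3]} (h : (3 : ℤ_[3]) ∣ (c - 1)) : ∃ t : ℤ_[3], t ^ 2 = c := by
  apply sq_of_hensel
  have h2 : ‖(2 : ℤ_[3])‖ = 1 := by
    have : IsUnit ((2 : ℤ) : ℤ_[3]) := unit_cast (by norm_num)
    have := PadicInt.isUnit_iff.1 this
    simpa using this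
  rw [h2]
  have hle : ‖1 - c‖ ≤ ((3:ℕ) : ℝ) ^ (-(1:ℕ) : ℤ) := by
    rw [PadicInt.norm_le_pow_iff_mem_span_pow, Ideal.mem_span_singleton]
    simpa using (dvd_neg.2 h)
  calc ‖1 - c‖ ≤ ((3:ℕ):ℝ)^(-(1:ℕ):ℤ) := hle
    _ < 1 ^ 2 := by norm_num

lemma sq2 {c : ℤ_[2]} (h : (8 : ℤ_[2]) ∣ (c - 1)) : ∃ t : ℤ_[2], t ^ 2 = c := by
  apply sq_of_hensel
  rw [show ((2:ℤ_[2])) = ((2:ℕ):ℤ_[2]) by norm_num, PadicInt.norm_p]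
  have hle : ‖1 - c‖ ≤ ((2:ℕ) : ℝ) ^ (-(3:ℕ) : ℤ) := by
    rw [PadicInt.norm_le_pow_iff_mem_span_pow, Ideal.mem_span_singleton]
    have h8 : (((2:ℕ):ℤ_[2])^3) = 8 := by norm_num
    rw [h8]
    simpa using (dvd_neg.2 h)
  calc ‖1 - c‖ ≤ ((2:ℕ):ℝ)^(-(3:ℕ):ℤ) := hle
    _ < ((2:ℕ):ℝ)⁻¹ ^ 2 := by norm_num

lemma solve2 {b M : ℤ} (hb : ¬ (2:ℤ) ∣ b) (h : (8:ℤ) ∣ (M - b)) :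
    ∃ t : ℤ_[2], (b : ℤ_[2]) * t ^ 2 = (M : ℤ_[2]) := by
  obtain ⟨c, hc⟩ := (unit_cast (p := 2) hb).exists_right_inv
  have hb2 : (8:ℤ) ∣ b^2 - 1 := by
    obtain ⟨k, hk⟩ : ∃ k, b = 2*k+1 := ⟨b/2, by omega⟩
    obtain ⟨m, hm⟩ := Int.even_mul_succ_self k
    exact ⟨m, by subst hk; nlinarith [hm]⟩
  have hMb : (8:ℤ) ∣ M*b - 1 := by
    have hr : M*b - 1 = (M-b)*b + (b^2-1) := by ring
    rw [hr]; exact dvd_add (h.mul_right b) hb2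
  have hcast : (8 : ℤ_[2]) ∣ ((M:ℤ_[2]) * (b:ℤ_[2]) - 1) := by
    have h2 := map_dvd (Int.castRingHom ℤ_[2]) hMb
    simp only [eq_intCast] at h2
    push_cast at h2
    convert h2 using 1
  obtain ⟨t₀, ht₀⟩ := sq2 hcast
  exact ⟨t₀ * c, by linear_combination ((b:ℤ_[2]) * c^2) * ht₀ + ((M:ℤ_[2]) * ((b:ℤ_[2])*c + 1)) * hc⟩

lemma sq3int {M : ℤ} (h : (3:ℤ) ∣ (M - 1)) : ∃ t : ℤ_[3], t ^ 2 = (M : ℤ_[3]) := by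
  apply sq3
  have h2 := map_dvd (Int.castRingHom ℤ_[3]) h
  simp only [eq_intCast] at h2
  push_cast at h2
  convert h2 using 1

lemma rep_of_two {p : ℕ} [Fact (Nat.Prime p)] (a : Fin 3 → ℤ) (u v : Fin 3 → ℤ_[p])
    (α β : ℤ_[p]) (N : ℤ)
    (hN : α ^ 2 * diagB p a u u + 2 * α * β * diagB p a u v + β ^ 2 * diagB p a v v = (N : ℤ_[p])) :
    diagRep p a N := by
  refine ⟨fun i => α * u i + β * v i, ?_⟩
  rw [← hN]
  simp only [diagB, Fin.sum_univ_three]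
  ring

lemma key3 (a : Fin 3 → ℤ) (h3 : IsPStable 3 a) (N : ℤ) (hN : ¬ ((3:ℤ) ∣ N)) :
    diagRep 3 a N := by
  rcases h3 with ⟨u, v, h1, h2, h12⟩ | ⟨Δ, ε, hΔsq, u, v, w, h1, h2, h3w, h12, h13, h23, hdet⟩
  · obtain ⟨h, hh⟩ := (unit_cast (p := 3) (m := 2) (by norm_num)).exists_right_inv
    have hh' : (2 : ℤ_[3]) * h = 1 := by push_cast at hh; exact hh
    apply rep_of_two a u v (((N : ℤ_[3]) + 1) * h) (((N : ℤ_[3]) - 1) * h) N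
    rw [h1, h2, h12]
    linear_combination ((N : ℤ_[3]) * (2*h + 1)) * hh'
  · have hN0 : ((N : ZMod 3)) ≠ 0 := by
      rw [Ne, ZMod.intCast_zmod_eq_zero_iff_dvd]; exact hN
    have hcases : ((N : ZMod 3)) = 1 ∨ ((N : ZMod 3)) = 2 := by
      revert hN0; generalize (N : ZMod 3) = z; revert z; decide
    rcases hcases with hN1 | hN2
    · have hd : (3:ℤ) ∣ N - 1 := by
        rw [show (3:ℤ) = ((3:ℕ):ℤ) by norm_num, ← ZMod.intCast_zmod_eq_zero_iff_dvd]
        push_cast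
        rw [hN1]; ring
      obtain ⟨t, ht⟩ := sq3int hd
      apply rep_of_two a u u t 0 N
      rw [h1]
      linear_combination ht
    · have hΔ0 : PadicInt.toZMod (Δ : ℤ_[3]) ≠ 0 := (Δ.isUnit.map PadicInt.toZMod).ne_zero
      have hΔ1 : PadicInt.toZMod (Δ : ℤ_[3]) ≠ 1 := by
        intro h1'
        have hz : PadicInt.toZMod ((Δ : ℤ_[3]) - 1) = 0 := by
          rw [map_sub, map_one, h1', sub_self]
        obtain ⟨t, ht⟩ := sq3 (by simpa using dvd_of_toZMod_eq_zero hz)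
        exact hΔsq ⟨t, by rw [← ht]; ring⟩
      have hΔ2 : PadicInt.toZMod (Δ : ℤ_[3]) = 2 := by
        revert hΔ0 hΔ1; generalize PadicInt.toZMod (Δ : ℤ_[3]) = z; revert z; decide
      have h1Δ : PadicInt.toZMod (1 - (Δ : ℤ_[3])) = 2 := by
        rw [map_sub, map_one, hΔ2]; decide
      have hu1Δ : IsUnit (1 - (Δ : ℤ_[3])) :=
        isUnit_of_toZMod_ne_zero (by rw [h1Δ]; decide)
      obtain ⟨e, he⟩ := hu1Δ.exists_right_inv
      have hte : PadicInt.toZMod e = 2 := by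
        have := congrArg PadicInt.toZMod he
        rw [map_mul, map_one, h1Δ] at this
        revert this; generalize PadicInt.toZMod e = z; revert z; decide
      have hc : (3 : ℤ_[3]) ∣ ((N : ℤ_[3]) * e - 1) := by
        apply dvd_of_toZMod_eq_zero
        rw [map_sub, map_mul, map_one, map_intCast, hte, hN2]
        decide
      obtain ⟨t, ht⟩ := sq3 hc
      apply rep_of_two a u v t t N
      rw [h1, h2, h12]
      linear_combination (1 - (Δ : ℤ_[3])) * ht + (N : ℤ_[3]) * he

lemma repU (a : Fin 3 → ℤ) (ha0 : ¬ (2:ℤ) ∣ a 0) (N j k : ℤ)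
    (h8 : (8:ℤ) ∣ (N - a 1 * j^2 - a 2 * k^2 - a 0)) : diagRep 2 a N := by
  obtain ⟨t, ht⟩ := solve2 (M := N - a 1 * j^2 - a 2 * k^2) ha0 (by omega)
  refine ⟨![t, (j:ℤ_[2]), (k:ℤ_[2])], ?_⟩
  simp only [Fin.sum_univ_three, Matrix.cons_val_zero, Matrix.cons_val_one, Matrix.head_cons,
    Matrix.cons_val_two, Matrix.tail_cons]
  push_cast at ht ⊢
  linear_combination ht

lemma rep2dA (a : Fin 3 → ℤ) (u v : Fin 3 → ℤ_[2]) (d : ℤ)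
    (h1 : diagB 2 a u u = 1) (h2 : diagB 2 a v v = (d : ℤ_[2])) (h12 : diagB 2 a u v = 0)
    (N c : ℤ) (hM : (8:ℤ) ∣ (N - d*c^2 - 1)) : diagRep 2 a N := by
  obtain ⟨t, ht⟩ := solve2 (b := 1) (M := N - d*c^2) (by norm_num) (by omega)
  apply rep_of_two a u v t (c : ℤ_[2]) N
  rw [h1, h2, h12]
  push_cast at ht
  linear_combination ht

lemma rep2dB (a : Fin 3 → ℤ) (u v : Fin 3 → ℤ_[2]) (d : ℤ) (hd : ¬ (2:ℤ) ∣ d)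
    (h1 : diagB 2 a u u = 1) (h2 : diagB 2 a v v = (d : ℤ_[2])) (h12 : diagB 2 a u v = 0)
    (N c : ℤ) (hM : (8:ℤ) ∣ (N - c^2 - d)) : diagRep 2 a N := by
  obtain ⟨t, ht⟩ := solve2 (b := d) (M := N - c^2) hd (by omega)
  apply rep_of_two a u v (c : ℤ_[2]) t N
  rw [h1, h2, h12]
  push_cast at ht
  linear_combination ht

lemma zmod4_iff (x c : ℤ) : (x : ZMod 4) = (c : ZMod 4) ↔ x % 4 = c % 4 := by
  rw [ZMod.intCast_eq_intCast_iff, Int.ModEq]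
  norm_num

set_option synthInstance.maxSize 2000 in
set_option maxHeartbeats 4000000 in
lemma comb : ∀ (u4 l4 : ZMod 4) (u3 l3 : ZMod 3) (c₁ c₂ : ZMod 4),
    (u4 = 1 ∨ u4 = 3) → (u3 ≠ 0) →
    ((c₁ = 1 ∧ c₂ = 3) ∨ ((c₁ = 1 ∨ c₁ = 3) ∧ (c₂ = 0 ∨ c₂ = 2))) →
    ∃ ν : Fin 5, (u4 * ((ν:ℕ):ZMod 4) + l4 = c₁ ∨ u4 * ((ν:ℕ):ZMod 4) + l4 = c₂) ∧
      u3 * ((ν:ℕ):ZMod 3) + l3 ≠ 0 := by decide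

/-- for a 2-stable and 3-stable diagonal ternary lattice `K`,
`u` coprime to 6 and any `l`, some class `u(12n+ν)+l`, `ν ∈ {0,...,4}`, is entirely
represented by `K` over `ℤ₂` and over `ℤ₃`. -/
theorem stmt_14 (a : Fin 3 → ℤ) (ha : ∀ i, 0 < a i)
    (h2 : Is2Stable a) (h3 : IsPStable 3 a)
    (u : ℤ) (hu : IsCoprime u 6) (l : ℤ) :
    ∃ ν : ℕ, ν ≤ 4 ∧ ∀ n : ℤ,
      diagRep 2 a (u * (12 * n + ν) + l) ∧ diagRep 3 a (u * (12 * n + ν) + l) := by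
  -- coprimality facts
  have hgcd : Int.gcd u 6 = 1 := Int.isCoprime_iff_gcd_eq_one.mp hu
  have hu2 : ¬ (2:ℤ) ∣ u := by
    intro hd
    have : (2:ℤ) ∣ (Int.gcd u 6 : ℤ) := Int.dvd_coe_gcd hd (by norm_num)
    rw [hgcd] at this; norm_num at this
  have hu3 : ¬ (3:ℤ) ∣ u := by
    intro hd
    have : (3:ℤ) ∣ (Int.gcd u 6 : ℤ) := Int.dvd_coe_gcd hd (by norm_num)
    rw [hgcd] at this; norm_num at this
  -- the two good classes mod 4
  obtain ⟨c₁, c₂, hc, H⟩ : ∃ c₁ c₂ : ZMod 4,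
      ((c₁ = 1 ∧ c₂ = 3) ∨ ((c₁ = 1 ∨ c₁ = 3) ∧ (c₂ = 0 ∨ c₂ = 2))) ∧
      ∀ N : ℤ, ((N : ZMod 4) = c₁ ∨ (N : ZMod 4) = c₂) → diagRep 2 a N := by
    rcases h2 with huni | hK
    · -- unimodular case
      have hprod := not_dvd_of_unit huni
      have h0 : ¬ (2:ℤ) ∣ a 0 := fun hd => hprod (hd.mul_right _ |>.mul_right _)
      have h1 : ¬ (2:ℤ) ∣ a 1 := fun hd => hprod (((hd.mul_left (a 0)).mul_right (a 2)))
      have h2' : ¬ (2:ℤ) ∣ a 2 := fun hd => hprod (hd.mul_left _)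
      refine ⟨((a 0 : ℤ) : ZMod 4), ((a 0 + a 1 : ℤ) : ZMod 4), ?_, ?_⟩
      · right
        constructor
        · rcases (show a 0 % 4 = 1 ∨ a 0 % 4 = 3 by omega) with h | h
          · left; rw [show (1 : ZMod 4) = ((1:ℤ) : ZMod 4) by norm_num, zmod4_iff]; omega
          · right; rw [show (3 : ZMod 4) = ((3:ℤ) : ZMod 4) by norm_num, zmod4_iff]; omega
        · rcases (show (a 0 + a 1) % 4 = 0 ∨ (a 0 + a 1) % 4 = 2 by omega) with h | h
          · left; rw [show (0 : ZMod 4) = ((0:ℤ) : ZMod 4) by norm_num, zmod4_iff]; omega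
          · right; rw [show (2 : ZMod 4) = ((2:ℤ) : ZMod 4) by norm_num, zmod4_iff]; omega
      · intro N hN
        rcases hN with hN | hN
        · rw [zmod4_iff] at hN
          rcases (show N % 8 = a 0 % 8 ∨ N % 8 = (a 0 + 4) % 8 by omega) with h | h
          · exact repU a h0 N 0 0 (by omega)
          · exact repU a h0 N 2 0 (by push_cast; omega)
        · rw [zmod4_iff] at hN
          rcases (show N % 8 = (a 0 + a 1) % 8 ∨ N % 8 = (a 0 + a 1 + 4) % 8 by omega) with h | h
          · exact repU a h0 N 1 0 (by push_cast; omega)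
          · exact repU a h0 N 1 2 (by push_cast; omega)
    · -- ⟨1,3⟩ or ⟨1,7⟩ case
      have key : ∀ N : ℤ, (N % 4 = 1 ∨ N % 4 = 3) → diagRep 2 a N := by
        rcases hK with ⟨x, y, hx, hy, hxy⟩ | ⟨x, y, hx, hy, hxy⟩
        · intro N hN
          have hy' : diagB 2 a y y = ((3:ℤ) : ℤ_[2]) := by rw [hy]; norm_num
          rcases (show N % 8 = 1 ∨ N % 8 = 3 ∨ N % 8 = 5 ∨ N % 8 = 7 by omega) with h | h | h | h
          · exact rep2dA a x y 3 hx hy' hxy N 0 (by omega)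
          · exact rep2dB a x y 3 (by norm_num) hx hy' hxy N 0 (by omega)
          · exact rep2dA a x y 3 hx hy' hxy N 2 (by omega)
          · exact rep2dB a x y 3 (by norm_num) hx hy' hxy N 2 (by omega)
        · intro N hN
          have hy' : diagB 2 a y y = ((7:ℤ) : ℤ_[2]) := by rw [hy]; norm_num
          rcases (show N % 8 = 1 ∨ N % 8 = 3 ∨ N % 8 = 5 ∨ N % 8 = 7 by omega) with h | h | h | h
          · exact rep2dA a x y 7 hx hy' hxy N 0 (by omega)
          · exact rep2dB a x y 7 (by norm_num) hx hy' hxy N 2 (by omega)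
          · exact rep2dA a x y 7 hx hy' hxy N 2 (by omega)
          · exact rep2dB a x y 7 (by norm_num) hx hy' hxy N 0 (by omega)
      refine ⟨1, 3, Or.inl ⟨rfl, rfl⟩, ?_⟩
      intro N hN
      apply key
      rcases hN with hN | hN
      · left
        rw [show (1 : ZMod 4) = ((1:ℤ) : ZMod 4) by norm_num] at hN
        rw [zmod4_iff] at hN; omega
      · right
        rw [show (3 : ZMod 4) = ((3:ℤ) : ZMod 4) by norm_num] at hN
        rw [zmod4_iff] at hN; omega
  -- the unit mod 4 and mod 3
  have hu4 : ((u : ZMod 4)) = 1 ∨ ((u : ZMod 4)) = 3 := by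
    rcases (show u % 4 = 1 ∨ u % 4 = 3 by omega) with h | h
    · left; rw [show (1 : ZMod 4) = ((1:ℤ) : ZMod 4) by norm_num, zmod4_iff]; omega
    · right; rw [show (3 : ZMod 4) = ((3:ℤ) : ZMod 4) by norm_num, zmod4_iff]; omega
  have hu3' : ((u : ZMod 3)) ≠ 0 := by
    rw [Ne, ZMod.intCast_zmod_eq_zero_iff_dvd]; exact hu3
  obtain ⟨ν, hν4, hν3⟩ := comb (u : ZMod 4) (l : ZMod 4) (u : ZMod 3) (l : ZMod 3) c₁ c₂ hu4 hu3' hc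
  refine ⟨(ν : ℕ), by omega, ?_⟩
  intro n
  have h120 : ((12 : ZMod 4)) = 0 := rfl
  have h123 : ((12 : ZMod 3)) = 0 := rfl
  have e4 : ((u * (12 * n + ((ν:ℕ):ℤ)) + l : ℤ) : ZMod 4)
      = (u : ZMod 4) * ((ν:ℕ) : ZMod 4) + (l : ZMod 4) := by
    push_cast
    linear_combination ((u : ZMod 4) * (n : ZMod 4)) * h120
  have e3 : ((u * (12 * n + ((ν:ℕ):ℤ)) + l : ℤ) : ZMod 3)
      = (u : ZMod 3) * ((ν:ℕ) : ZMod 3) + (l : ZMod 3) := by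
    push_cast
    linear_combination ((u : ZMod 3) * (n : ZMod 3)) * h123
  constructor
  · apply H
    rw [e4]
    exact hν4
  · apply key3 a h3
    rw [show (3:ℤ) = ((3:ℕ):ℤ) by norm_num, ← ZMod.intCast_zmod_eq_zero_iff_dvd]
    rw [e3]
    exact hν3
end

section
/- Let p > 3 be prime, u a positive integer coprime to p, and a₁,a₂,a₃,α₁,α₂,α₃ positive integers such that the ℤ_p-lattice ⟨a₁,a₂,a₃⟩ is isometric to ⟨1,-Δ_p⟩ ⊥ ⟨pε_p⟩ for some unit ε_p ∈ ℤ_p^×. Then there exists an integer v with 0 < v < p² such that: uv + a₁α₁² + a₂α₂² is not represented by ⟨a₁,a₂⟩ over ℤ_p; uv + a₁α₁² + a₂α₂² + a₃α₃² is represented by ⟨a₁,a₂,a₃⟩ over ℤ_p; and both ord_p(uv + a₁α₁² + a₂α₂²) ≤ 1 and ord_p(uv + a₁α₁² + a₂α₂² + a₃α₃²) ≤ 1. -/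
open scoped BigOperators

namespace Stmt15Aux

variable {p : ℕ} [Fact (Nat.Prime p)]

lemma dvd_iff_toZMod_eq_zero (x : ℤ_[p]) : PadicInt.toZMod x = 0 ↔ (p : ℤ_[p]) ∣ x := by
  rw [← Ideal.mem_span_singleton, ← PadicInt.maximalIdeal_eq_span_p, ← PadicInt.ker_toZMod,
    RingHom.mem_ker]

lemma isUnit_iff_not_dvd (x : ℤ_[p]) : IsUnit x ↔ ¬ (p : ℤ_[p]) ∣ x := by
  rw [PadicInt.isUnit_iff, ← PadicInt.norm_lt_one_iff_dvd]
  constructor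
  · intro h h'; rw [h] at h'; exact lt_irrefl _ h'
  · intro h; exact le_antisymm (PadicInt.norm_le_one x) (not_lt.mp h)

lemma isUnit_iff_toZMod_ne_zero (x : ℤ_[p]) : IsUnit x ↔ PadicInt.toZMod x ≠ 0 := by
  rw [isUnit_iff_not_dvd, not_iff_not.mpr (dvd_iff_toZMod_eq_zero x).symm]

lemma dvd_intCast_iff (k : ℤ) : (p : ℤ_[p]) ∣ (k : ℤ_[p]) ↔ (p : ℤ) ∣ k := by
  have := PadicInt.pow_p_dvd_int_iff (p := p) 1 k
  simpa using this

lemma toZMod_intCast (k : ℤ) : PadicInt.toZMod ((k : ℤ_[p])) = (k : ZMod p) := by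
  simp [map_intCast]

lemma toZMod_natCast (k : ℕ) : PadicInt.toZMod ((k : ℤ_[p])) = (k : ZMod p) := by
  simp [map_natCast]

lemma two_unit (hp : 2 < p) : IsUnit (2 : ℤ_[p]) := by
  rw [show ((2 : ℤ_[p])) = ((2 : ℤ) : ℤ_[p]) by push_cast; ring, isUnit_iff_not_dvd,
    dvd_intCast_iff]
  intro h
  have := Int.le_of_dvd (by norm_num) h
  omega

lemma isSquare_of_isSquare_toZMod (hp : 2 < p) (x : ℤ_[p]) (hx : IsUnit x)
    (h : IsSquare (PadicInt.toZMod x)) : IsSquare x := by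
  obtain ⟨s, hs⟩ := h
  have hs0 : s ≠ 0 := by
    rintro rfl
    rw [mul_zero] at hs
    exact (isUnit_iff_toZMod_ne_zero x).mp hx hs
  set a : ℤ_[p] := ((s.val : ℕ) : ℤ_[p]) with ha
  have hta : PadicInt.toZMod a = s := by
    rw [ha, toZMod_natCast, ZMod.natCast_val, ZMod.cast_id]
  have haU : IsUnit a := (isUnit_iff_toZMod_ne_zero a).mpr (by rw [hta]; exact hs0)
  set F : Polynomial ℤ_[p] := Polynomial.X ^ 2 - Polynomial.C x with hF
  have hev : F.eval a = a ^ 2 - x := by simp [hF]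
  have hdf : F.derivative.eval a = 2 * a := by
    simp [hF]
    exact Or.inl one_add_one_eq_two
  have hnorm : ‖F.eval a‖ < ‖F.derivative.eval a‖ ^ 2 := by
    rw [hev, hdf]
    have h1 : ‖(2 : ℤ_[p]) * a‖ = 1 := PadicInt.isUnit_iff.mp ((two_unit hp).mul haU)
    rw [h1]
    have h2 : (p : ℤ_[p]) ∣ (a ^ 2 - x) := by
      rw [← dvd_iff_toZMod_eq_zero]
      rw [map_sub, map_pow, hta, hs]
      ring
    have := (PadicInt.norm_lt_one_iff_dvd _).mpr h2
    simpa using this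
  obtain ⟨z, hz, -⟩ := hensels_lemma hnorm
  refine ⟨z, ?_⟩
  have : z ^ 2 - x = 0 := by simpa [hF] using hz
  rw [← sub_eq_zero]
  linear_combination -this


-- square residues lemmas
lemma toZMod_isSquare {x : ℤ_[p]} (h : IsSquare x) : IsSquare (PadicInt.toZMod x) := by
  obtain ⟨s, hs⟩ := h
  exact ⟨PadicInt.toZMod s, by rw [hs, map_mul]⟩

lemma not_isSquare_toZMod (hp : 2 < p) (Δ : ℤ_[p]ˣ) (hΔ : ¬ IsSquare ((Δ : ℤ_[p]))) :
    ¬ IsSquare (PadicInt.toZMod ((Δ : ℤ_[p]))) := fun h =>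
  hΔ (isSquare_of_isSquare_toZMod hp _ Δ.isUnit h)

lemma p_dvd_of_dvd_sq {x : ℤ_[p]} (h : (p : ℤ_[p]) ∣ x ^ 2) : (p : ℤ_[p]) ∣ x := by
  have := PadicInt.prime_p (p := p)
  rcases this.dvd_mul.mp (by rwa [← sq]) with h | h <;> exact h

lemma pcast_ne_zero : ((p : ℤ_[p])) ≠ 0 := by
  have := PadicInt.norm_p (p := p)
  intro h
  rw [h, norm_zero] at this
  have hp1 : (1:ℝ) < (p:ℝ) := by exact_mod_cast (Fact.out : p.Prime).one_lt
  have : (0:ℝ) < (p:ℝ)⁻¹ := by positivity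
  rw [← ‹(0:ℝ) = (p:ℝ)⁻¹›] at this
  exact lt_irrefl _ this

/-- Key non-representation lemma: `p*ε*m + p²·ρ` with `m` a non-square-residue unit
is not of the form `α² - Δβ² + pεγ²`. -/
lemma key_nonrep (hp : 2 < p) (Δ ε : ℤ_[p]ˣ) (hΔ : ¬ IsSquare ((Δ : ℤ_[p])))
    (m : ℤ_[p]) (hm : ¬ IsSquare (PadicInt.toZMod m))
    (α β γ : ℤ_[p])
    (h : (p : ℤ_[p]) ^ 2 ∣ (α ^ 2 - (Δ : ℤ_[p]) * β ^ 2 + (p : ℤ_[p]) * (ε : ℤ_[p]) * γ ^ 2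
          - (p : ℤ_[p]) * (ε : ℤ_[p]) * m)) : False := by
  have hΔ' := not_isSquare_toZMod hp Δ hΔ
  -- p ∣ α² - Δβ²
  have h1 : (p : ℤ_[p]) ∣ (α ^ 2 - (Δ : ℤ_[p]) * β ^ 2) := by
    obtain ⟨ρ, hρ⟩ := h
    refine ⟨(ε : ℤ_[p]) * m - (ε : ℤ_[p]) * γ ^ 2 + (p : ℤ_[p]) * ρ, ?_⟩
    linear_combination hρ
  have h1' : PadicInt.toZMod α ^ 2 = PadicInt.toZMod (Δ : ℤ_[p]) * PadicInt.toZMod β ^ 2 := by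
    have := (dvd_iff_toZMod_eq_zero _).mpr h1
    rw [map_sub, map_mul, map_pow, map_pow] at this
    linear_combination this
  have hβ : PadicInt.toZMod β = 0 := by
    by_contra hβ
    exact hΔ' ⟨PadicInt.toZMod α * (PadicInt.toZMod β)⁻¹, by
      have hβ' : PadicInt.toZMod β * (PadicInt.toZMod β)⁻¹ = 1 := mul_inv_cancel₀ hβ
      linear_combination -((PadicInt.toZMod β)⁻¹)^2 * h1' - (PadicInt.toZMod ((Δ:ℤ_[p]))) * (1 + PadicInt.toZMod β * (PadicInt.toZMod β)⁻¹) * hβ'⟩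
  have hα : PadicInt.toZMod α = 0 := by
    have : PadicInt.toZMod α ^ 2 = 0 := by rw [h1', hβ]; ring
    exact pow_eq_zero_iff (n := 2) (by norm_num) |>.mp this
  -- p² ∣ α² - Δβ²
  have h2 : (p : ℤ_[p]) ^ 2 ∣ (α ^ 2 - (Δ : ℤ_[p]) * β ^ 2) := by
    obtain ⟨α', hα'⟩ := (dvd_iff_toZMod_eq_zero α).mp hα
    obtain ⟨β', hβ'⟩ := (dvd_iff_toZMod_eq_zero β).mp hβ
    exact ⟨α' ^ 2 - (Δ : ℤ_[p]) * β' ^ 2, by rw [hα', hβ']; ring⟩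
  -- hence p² ∣ pε(γ² - m), so γ² ≡ m mod p
  have h3 : (p : ℤ_[p]) ∣ (γ ^ 2 - m) := by
    have h4 : (p : ℤ_[p]) ^ 2 ∣ (p : ℤ_[p]) * ((ε : ℤ_[p]) * (γ ^ 2 - m)) := by
      obtain ⟨ρ, hρ⟩ := h
      obtain ⟨σ, hσ⟩ := h2
      exact ⟨ρ - σ, by linear_combination hρ - hσ⟩
    have h5 : (p : ℤ_[p]) ∣ ((ε : ℤ_[p]) * (γ ^ 2 - m)) := by
      rw [sq] at h4
      exact (mul_dvd_mul_iff_left (pcast_ne_zero (p := p))).mp h4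
    obtain ⟨t, ht⟩ := h5
    exact ⟨((ε⁻¹ : ℤ_[p]ˣ) : ℤ_[p]) * t, by
      have hu : ((ε⁻¹ : ℤ_[p]ˣ) : ℤ_[p]) * (ε : ℤ_[p]) = 1 := ε.inv_mul
      linear_combination ((ε⁻¹ : ℤ_[p]ˣ) : ℤ_[p]) * ht - (γ ^ 2 - m) * hu⟩
  exact hm ⟨PadicInt.toZMod γ, by
    have := (dvd_iff_toZMod_eq_zero _).mpr h3
    rw [map_sub, map_pow] at this
    linear_combination -this⟩


lemma exists_norm (hp : 2 < p) (Δ : ℤ_[p]ˣ) (hΔ : ¬ IsSquare ((Δ : ℤ_[p])))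
    (n : ℤ_[p]) (hn : IsUnit n) :
    ∃ α β : ℤ_[p], α ^ 2 - (Δ : ℤ_[p]) * β ^ 2 = n := by
  have hΔ' := not_isSquare_toZMod hp Δ hΔ
  have hΔ0 : PadicInt.toZMod ((Δ : ℤ_[p])) ≠ 0 := (isUnit_iff_toZMod_ne_zero _).mp Δ.isUnit
  have hn0 : PadicInt.toZMod n ≠ 0 := (isUnit_iff_toZMod_ne_zero _).mp hn
  -- solve mod p
  obtain ⟨a, b, hab⟩ : ∃ a b : ZMod p,
      a ^ 2 - PadicInt.toZMod n - PadicInt.toZMod ((Δ : ℤ_[p])) * b ^ 2 = 0 := by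
    have hcard : Fintype.card (ZMod p) % 2 = 1 := by
      rw [ZMod.card]
      exact Nat.odd_iff.mp ((Fact.out : p.Prime).odd_of_ne_two (by omega))
    obtain ⟨a, b, hab⟩ := FiniteField.exists_root_sum_quadratic
      (f := Polynomial.X ^ 2 - Polynomial.C (PadicInt.toZMod n))
      (g := Polynomial.C (-(PadicInt.toZMod ((Δ : ℤ_[p])))) * Polynomial.X ^ 2)
      (Polynomial.degree_X_pow_sub_C (by norm_num) _)
      (by rw [Polynomial.degree_C_mul_X_pow _ (neg_ne_zero.mpr hΔ0)]; rfl)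
      hcard
    refine ⟨a, b, ?_⟩
    simp only [Polynomial.eval_add, Polynomial.eval_sub, Polynomial.eval_pow,
      Polynomial.eval_X, Polynomial.eval_C, Polynomial.eval_mul] at hab
    linear_combination hab
  by_cases hA : a = 0
  · -- n ≡ -Δ b², use β
    have hb0 : b ≠ 0 := by
      intro hb; rw [hA, hb] at hab; simp at hab; exact hn0 (by linear_combination hab)
    have hinv : ((Δ⁻¹ : ℤ_[p]ˣ) : ℤ_[p]) * (Δ : ℤ_[p]) = 1 := Δ.inv_mul
    set K : ℤ_[p] := -n * ((Δ⁻¹ : ℤ_[p]ˣ) : ℤ_[p]) with hK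
    have htK : PadicInt.toZMod K = b ^ 2 := by
      have hinv' : PadicInt.toZMod ((Δ⁻¹ : ℤ_[p]ˣ) : ℤ_[p]) * PadicInt.toZMod ((Δ : ℤ_[p])) = 1 := by
        rw [← map_mul, hinv, map_one]
      rw [hK, map_mul, map_neg]
      rw [hA] at hab
      linear_combination (PadicInt.toZMod ((Δ⁻¹ : ℤ_[p]ˣ) : ℤ_[p])) * hab
        + (b ^ 2) * hinv'
    have hKu : IsUnit K := (isUnit_iff_toZMod_ne_zero K).mpr (by
      rw [htK]; exact pow_ne_zero 2 hb0)
    obtain ⟨t, ht⟩ := isSquare_of_isSquare_toZMod hp K hKu ⟨b, by rw [htK]; ring⟩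
    refine ⟨0, t, ?_⟩
    linear_combination (Δ : ℤ_[p]) * ht + n * hinv
  · -- a ≠ 0
    set β₀ : ℤ_[p] := ((b.val : ℕ) : ℤ_[p]) with hβ₀
    have htβ : PadicInt.toZMod β₀ = b := by rw [hβ₀, toZMod_natCast, ZMod.natCast_val, ZMod.cast_id]
    set K : ℤ_[p] := n + (Δ : ℤ_[p]) * β₀ ^ 2 with hK
    have htK : PadicInt.toZMod K = a ^ 2 := by
      rw [hK, map_add, map_mul, map_pow, htβ]
      linear_combination -hab
    have hKu : IsUnit K := (isUnit_iff_toZMod_ne_zero K).mpr (by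
      rw [htK]; exact pow_ne_zero 2 hA)
    obtain ⟨t, ht⟩ := isSquare_of_isSquare_toZMod hp K hKu ⟨a, by rw [htK]; ring⟩
    refine ⟨t, β₀, ?_⟩
    linear_combination -ht


lemma exists_v2 (u T : ℤ) (hu : IsCoprime u (p : ℤ)) (hT : ¬ ((p : ℤ) ^ 2 ∣ T)) :
    ∃ v : ℤ, 0 < v ∧ v < (p : ℤ) ^ 2 ∧ (p : ℤ) ^ 2 ∣ (u * v - T) := by
  have hp1 : 1 < p := (Fact.out : p.Prime).one_lt
  haveI : NeZero (p ^ 2) := ⟨pow_ne_zero 2 (by omega)⟩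
  obtain ⟨x, y, hxy⟩ := (hu.pow_right (n := 2))
  have h0 : ((p : ZMod (p ^ 2))) ^ 2 = 0 := by rw [← Nat.cast_pow, ZMod.natCast_self]
  have hA : (x : ZMod (p ^ 2)) * (u : ZMod (p ^ 2)) = 1 := by
    have hc := congrArg (fun t : ℤ => (t : ZMod (p ^ 2))) hxy
    push_cast at hc
    rw [h0, mul_zero, add_zero] at hc
    exact hc
  set V : ZMod (p ^ 2) := (x : ZMod (p ^ 2)) * (T : ZMod (p ^ 2)) with hV
  have hTV : (T : ZMod (p ^ 2)) = (u : ZMod (p ^ 2)) * V := by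
    rw [hV, ← mul_assoc, mul_comm ((u : ZMod (p ^ 2))) ((x : ZMod (p ^ 2))), hA, one_mul]
  have hV0 : V ≠ 0 := by
    intro h
    apply hT
    have : (T : ZMod (p ^ 2)) = 0 := by rw [hTV, h, mul_zero]
    have := (ZMod.intCast_zmod_eq_zero_iff_dvd T (p ^ 2)).mp this
    push_cast at this
    exact_mod_cast this
  refine ⟨(V.val : ℤ), ?_, ?_, ?_⟩
  · have : V.val ≠ 0 := fun h => hV0 ((ZMod.val_eq_zero V).mp h)
    exact_mod_cast Nat.pos_of_ne_zero this
  · have := ZMod.val_lt V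
    push_cast
    exact_mod_cast this
  · have hz : ((u * (V.val : ℤ) - T : ℤ) : ZMod (p ^ 2)) = 0 := by
      push_cast
      rw [ZMod.natCast_val, ZMod.cast_id, hTV]
      ring
    have := (ZMod.intCast_zmod_eq_zero_iff_dvd _ (p ^ 2)).mp hz
    push_cast at this
    exact_mod_cast this

lemma exists_v1 (u T : ℤ) (hu : IsCoprime u (p : ℤ)) :
    ∃ v : ℤ, 0 < v ∧ v ≤ (p : ℤ) ∧ (p : ℤ) ∣ (u * v - T) := by
  have hp1 : 1 < p := (Fact.out : p.Prime).one_lt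
  haveI : NeZero p := ⟨by omega⟩
  obtain ⟨x, y, hxy⟩ := hu
  have h0 : ((p : ZMod p)) = 0 := by exact_mod_cast ZMod.natCast_self p
  have hA : (x : ZMod p) * (u : ZMod p) = 1 := by
    have hc := congrArg (fun t : ℤ => (t : ZMod p)) hxy
    push_cast at hc
    rw [h0, mul_zero, add_zero] at hc
    exact hc
  set V : ZMod p := (x : ZMod p) * (T : ZMod p) with hV
  have hTV : (T : ZMod p) = (u : ZMod p) * V := by
    rw [hV, ← mul_assoc, mul_comm ((u : ZMod p)) ((x : ZMod p)), hA, one_mul]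
  by_cases hV0 : V = 0
  · refine ⟨(p : ℤ), by exact_mod_cast Nat.pos_of_ne_zero (by omega), le_refl _, ?_⟩
    have hpT : (p : ℤ) ∣ T := by
      have : (T : ZMod p) = 0 := by rw [hTV, hV0, mul_zero]
      exact_mod_cast (ZMod.intCast_zmod_eq_zero_iff_dvd T p).mp this
    exact dvd_sub (Dvd.intro_left u rfl) hpT
  · refine ⟨(V.val : ℤ), ?_, ?_, ?_⟩
    · have : V.val ≠ 0 := fun h => hV0 ((ZMod.val_eq_zero V).mp h)
      exact_mod_cast Nat.pos_of_ne_zero this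
    · exact_mod_cast Nat.le_of_lt_succ (Nat.lt_succ_of_lt (ZMod.val_lt V)) |>.trans (le_refl _)
    · have hz : ((u * (V.val : ℤ) - T : ℤ) : ZMod p) = 0 := by
        push_cast
        rw [ZMod.natCast_val, ZMod.cast_id, hTV]
        ring
      exact_mod_cast (ZMod.intCast_zmod_eq_zero_iff_dvd _ p).mp hz


lemma transfer (a₁ a₂ a₃ : ℤ) (Δ ε : ℤ_[p]ˣ) (xv yv zv : Fin 3 → ℤ_[p])
    (e1 : (a₁ : ℤ_[p]) * xv 0 ^ 2 + (a₂ : ℤ_[p]) * xv 1 ^ 2 + (a₃ : ℤ_[p]) * xv 2 ^ 2 = 1)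
    (e2 : (a₁ : ℤ_[p]) * yv 0 ^ 2 + (a₂ : ℤ_[p]) * yv 1 ^ 2 + (a₃ : ℤ_[p]) * yv 2 ^ 2 = -(Δ : ℤ_[p]))
    (e3 : (a₁ : ℤ_[p]) * zv 0 ^ 2 + (a₂ : ℤ_[p]) * zv 1 ^ 2 + (a₃ : ℤ_[p]) * zv 2 ^ 2
        = (p : ℤ_[p]) * (ε : ℤ_[p]))
    (e4 : (a₁ : ℤ_[p]) * xv 0 * yv 0 + (a₂ : ℤ_[p]) * xv 1 * yv 1 + (a₃ : ℤ_[p]) * xv 2 * yv 2 = 0)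
    (e5 : (a₁ : ℤ_[p]) * xv 0 * zv 0 + (a₂ : ℤ_[p]) * xv 1 * zv 1 + (a₃ : ℤ_[p]) * xv 2 * zv 2 = 0)
    (e6 : (a₁ : ℤ_[p]) * yv 0 * zv 0 + (a₂ : ℤ_[p]) * yv 1 * zv 1 + (a₃ : ℤ_[p]) * yv 2 * zv 2 = 0)
    (hdet : IsUnit (Matrix.of ![xv, yv, zv]).det)
    (ξ0 ξ1 ξ2 : ℤ_[p]) (n : ℤ_[p])
    (hQ : (a₁ : ℤ_[p]) * ξ0 ^ 2 + (a₂ : ℤ_[p]) * ξ1 ^ 2 + (a₃ : ℤ_[p]) * ξ2 ^ 2 = n) :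
    ∃ α β γ : ℤ_[p], α ^ 2 - (Δ : ℤ_[p]) * β ^ 2 + (p : ℤ_[p]) * (ε : ℤ_[p]) * γ ^ 2 = n := by
  set ξ : Fin 3 → ℤ_[p] := ![ξ0, ξ1, ξ2] with hξ
  have hx0 : ξ 0 = ξ0 := rfl
  have hx1 : ξ 1 = ξ1 := rfl
  have hx2 : ξ 2 = ξ2 := rfl
  rw [← hx0, ← hx1, ← hx2] at hQ
  set M : Matrix (Fin 3) (Fin 3) ℤ_[p] := Matrix.of ![xv, yv, zv] with hM
  haveI : Invertible M := M.invertibleOfIsUnitDet hdet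
  set c : Fin 3 → ℤ_[p] := Matrix.vecMul ξ (⅟M) with hc
  have hcM : Matrix.vecMul c M = ξ := by
    rw [hc, Matrix.vecMul_vecMul, invOf_mul_self, Matrix.vecMul_one]
  have hj : ∀ j, c 0 * xv j + c 1 * yv j + c 2 * zv j = ξ j := by
    intro j
    have := congrFun hcM j
    simp only [Matrix.vecMul, dotProduct, Fin.sum_univ_three, hM, Matrix.of_apply,
      Matrix.cons_val_zero, Matrix.cons_val_one, Matrix.head_cons, Matrix.cons_val_two,
      Matrix.tail_cons] at this
    exact this
  have h0 := hj 0
  have h1 := hj 1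
  have h2 := hj 2
  refine ⟨c 0, c 1, c 2, ?_⟩
  linear_combination hQ - (c 0) ^ 2 * e1 - (c 1) ^ 2 * e2 - (c 2) ^ 2 * e3
    - 2 * (c 0) * (c 1) * e4 - 2 * (c 0) * (c 2) * e5 - 2 * (c 1) * (c 2) * e6
    + (a₁ : ℤ_[p]) * ((c 0 * xv 0 + c 1 * yv 0 + c 2 * zv 0) + ξ 0) * h0
    + (a₂ : ℤ_[p]) * ((c 0 * xv 1 + c 1 * yv 1 + c 2 * zv 1) + ξ 1) * h1
    + (a₃ : ℤ_[p]) * ((c 0 * xv 2 + c 1 * yv 2 + c 2 * zv 2) + ξ 2) * h2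


lemma padicValInt_le_one (N : ℤ) (h : ¬ ((p : ℤ) ^ 2 ∣ N)) : padicValInt p N ≤ 1 := by
  by_contra hc
  push_neg at hc
  exact h ((padicValInt_dvd_iff 2 N).mpr (Or.inr hc))

lemma not_int_sq_dvd {N : ℤ} (h : ¬ ((p : ℤ_[p]) ^ 2 ∣ (N : ℤ_[p]))) : ¬ ((p : ℤ) ^ 2 ∣ N) := by
  intro hd
  apply h
  rw [PadicInt.pow_p_dvd_int_iff]
  push_cast
  exact_mod_cast hd

lemma unit_dvd_cancel (ε : ℤ_[p]ˣ) (x : ℤ_[p]) (h : (p : ℤ_[p]) ∣ (ε : ℤ_[p]) * x) :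
    (p : ℤ_[p]) ∣ x := by
  obtain ⟨k, hk⟩ := h
  have hεinv : ((ε⁻¹ : ℤ_[p]ˣ) : ℤ_[p]) * (ε : ℤ_[p]) = 1 := ε.inv_mul
  exact ⟨((ε⁻¹ : ℤ_[p]ˣ) : ℤ_[p]) * k, by
    linear_combination ((ε⁻¹ : ℤ_[p]ˣ) : ℤ_[p]) * hk - x * hεinv⟩

lemma three_ne_zero' (hp3 : 3 < p) : (3 : ZMod p) ≠ 0 := by
  haveI : NeZero p := ⟨by omega⟩
  intro h
  have := (ZMod.natCast_eq_zero_iff 3 p).mp h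
  have := Nat.le_of_dvd (by norm_num) this
  omega

lemma two_ne_zero' (hp3 : 3 < p) : (2 : ZMod p) ≠ 0 := by
  haveI : NeZero p := ⟨by omega⟩
  intro h
  have := (ZMod.natCast_eq_zero_iff 2 p).mp h
  have := Nat.le_of_dvd (by norm_num) this
  omega

lemma nonsquare_exists (hp3 : 3 < p) : ∃ s : ZMod p, ¬ IsSquare s := by
  haveI : Fact (1 < p) := ⟨by omega⟩
  apply FiniteField.exists_nonsquare
  rw [ZMod.ringChar_zmod_n]
  omega

lemma four_mul_nonsquare (hp3 : 3 < p) {s : ZMod p} (hs : ¬ IsSquare s) :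
    ¬ IsSquare ((4 : ZMod p) * s) := by
  rintro ⟨t, ht⟩
  apply hs
  refine ⟨t * (2 : ZMod p)⁻¹, ?_⟩
  have h2 : (2 : ZMod p) * (2 : ZMod p)⁻¹ = 1 := mul_inv_cancel₀ (two_ne_zero' hp3)
  linear_combination ((2:ZMod p)⁻¹)^2 * ht + (- s*((2:ZMod p))*((2:ZMod p)⁻¹) - s) * h2

lemma nonsquare_ne_zero {s : ZMod p} (hs : ¬ IsSquare s) : s ≠ 0 := by
  rintro rfl; exact hs ⟨0, by ring⟩


lemma caseB_choice (hp3 : 3 < p) (u : ℤ) (hup : IsCoprime u (p : ℤ)) (c d K : ℤ)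
    (hK : ¬ (p : ℤ) ∣ K) :
    ∃ (v : ℤ) (s : ZMod p), 0 < v ∧ v < (p : ℤ) ^ 2 ∧ ¬ IsSquare s ∧
      ((u * v + c : ℤ) : ZMod p) = (K : ZMod p) * s ∧ ((u * v + c + d : ℤ) : ZMod p) ≠ 0 := by
  haveI : NeZero p := ⟨by omega⟩
  obtain ⟨n₀, hn₀⟩ := nonsquare_exists hp3
  have hK0 : (K : ZMod p) ≠ 0 := fun h => hK ((ZMod.intCast_zmod_eq_zero_iff_dvd K p).mp h)
  have hn₀0 : n₀ ≠ 0 := nonsquare_ne_zero hn₀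
  set s : ZMod p := if (K : ZMod p) * n₀ = -((d : ZMod p)) then (4 : ZMod p) * n₀ else n₀ with hs
  have hsns : ¬ IsSquare s := by
    rw [hs]; split
    · exact four_mul_nonsquare hp3 hn₀
    · exact hn₀
  have hsne : (K : ZMod p) * s ≠ -((d : ZMod p)) := by
    rw [hs]; split_ifs with h
    · intro h4
      rw [← h] at h4
      have h3 : (3 : ZMod p) * ((K : ZMod p) * n₀) = 0 := by linear_combination h4
      rcases mul_eq_zero.mp h3 with h' | h'
      · exact three_ne_zero' hp3 h'
      · rcases mul_eq_zero.mp h' with h'' | h''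
        · exact hK0 h''
        · exact hn₀0 h''
    · exact h
  set r : ZMod p := (K : ZMod p) * s with hr
  set T : ℤ := (r.val : ℤ) - c with hT
  obtain ⟨v, hv0, hvp, hvd⟩ := exists_v1 u T hup
  have hp1 : (1 : ℤ) < (p : ℤ) := by exact_mod_cast (by omega : 1 < p)
  have hN1 : ((u * v + c : ℤ) : ZMod p) = r := by
    have h1 : ((u * v - T : ℤ) : ZMod p) = 0 := (ZMod.intCast_zmod_eq_zero_iff_dvd _ p).mpr hvd
    rw [hT] at h1
    push_cast at h1 ⊢
    rw [ZMod.natCast_val, ZMod.cast_id] at h1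
    linear_combination h1
  refine ⟨v, s, hv0, ?_, hsns, hN1, ?_⟩
  · nlinarith
  · intro h
    apply hsne
    have : ((u * v + c + d : ℤ) : ZMod p) = r + (d : ZMod p) := by push_cast at h ⊢; push_cast at hN1; linear_combination hN1
    rw [this] at h
    exact eq_neg_of_add_eq_zero_left h

lemma padicValInt_le_one_of_ne (N : ℤ) (h : ((N : ZMod p)) ≠ 0) : padicValInt p N ≤ 1 := by
  apply padicValInt_le_one
  intro hdvd
  exact h ((ZMod.intCast_zmod_eq_zero_iff_dvd N p).mpr
    ((dvd_pow_self (p : ℤ) two_ne_zero).trans hdvd))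

lemma padicValInt_le_one_of_pcast (N : ℤ) (h : ¬ ((p : ℤ_[p]) ^ 2 ∣ (N : ℤ_[p]))) :
    padicValInt p N ≤ 1 := padicValInt_le_one N (not_int_sq_dvd h)

end Stmt15Aux

open Stmt15Aux in
set_option maxHeartbeats 1000000 in
/-- existence of a suitable `v` with `0 < v < p²` for an anisotropic
`p`-stable diagonal ternary lattice `⟨a₁,a₂,a₃⟩ ≅ ⟨1,-Δ_p⟩ ⊥ ⟨pε_p⟩` over `ℤ_p`. -/
theorem stmt_15 (p : ℕ) [Fact (Nat.Prime p)] (hp : 3 < p)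
    (u : ℤ) (hu : 0 < u) (hup : IsCoprime u (p : ℤ))
    (a₁ a₂ a₃ α₁ α₂ α₃ : ℤ)
    (ha : 0 < a₁ ∧ 0 < a₂ ∧ 0 < a₃) (hα : 0 < α₁ ∧ 0 < α₂ ∧ 0 < α₃)
    (hiso : ∃ Δ ε : ℤ_[p]ˣ, ¬ IsSquare (Δ : ℤ_[p]) ∧
      ∃ x y z : Fin 3 → ℤ_[p],
        diagB p ![a₁, a₂, a₃] x x = 1 ∧ diagB p ![a₁, a₂, a₃] y y = -(Δ : ℤ_[p]) ∧
        diagB p ![a₁, a₂, a₃] z z = (p : ℤ_[p]) * (ε : ℤ_[p]) ∧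
        diagB p ![a₁, a₂, a₃] x y = 0 ∧ diagB p ![a₁, a₂, a₃] x z = 0 ∧
        diagB p ![a₁, a₂, a₃] y z = 0 ∧
        IsUnit (Matrix.det (Matrix.of ![x, y, z]))) :
    ∃ v : ℤ, 0 < v ∧ v < (p : ℤ) ^ 2 ∧
      ¬ (∃ x y : ℤ_[p],
          (a₁ : ℤ_[p]) * x ^ 2 + (a₂ : ℤ_[p]) * y ^ 2 =
            ((u * v + a₁ * α₁ ^ 2 + a₂ * α₂ ^ 2 : ℤ) : ℤ_[p])) ∧
      (∃ x y z : ℤ_[p],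
          (a₁ : ℤ_[p]) * x ^ 2 + (a₂ : ℤ_[p]) * y ^ 2 + (a₃ : ℤ_[p]) * z ^ 2 =
            ((u * v + a₁ * α₁ ^ 2 + a₂ * α₂ ^ 2 + a₃ * α₃ ^ 2 : ℤ) : ℤ_[p])) ∧
      max (padicValInt p (u * v + a₁ * α₁ ^ 2 + a₂ * α₂ ^ 2))
          (padicValInt p (u * v + a₁ * α₁ ^ 2 + a₂ * α₂ ^ 2 + a₃ * α₃ ^ 2)) ≤ 1 := by
  classical
  have hp2 : 2 < p := by omega
  haveI : Fact (1 < p) := ⟨by omega⟩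
  haveI : NeZero p := ⟨by omega⟩
  obtain ⟨Δ, ε, hΔ, xv, yv, zv, hxx, hyy, hzz, hxy, hxz, hyz, hdet⟩ := hiso
  have expand : ∀ (w w' : Fin 3 → ℤ_[p]) (n : ℤ_[p]), diagB p ![a₁, a₂, a₃] w w' = n →
      (a₁ : ℤ_[p]) * w 0 * w' 0 + (a₂ : ℤ_[p]) * w 1 * w' 1 + (a₃ : ℤ_[p]) * w 2 * w' 2 = n := by
    intro w w' n hn
    rw [← hn]
    simp [diagB, Fin.sum_univ_three]
  have e1 : (a₁ : ℤ_[p]) * xv 0 ^ 2 + (a₂ : ℤ_[p]) * xv 1 ^ 2 + (a₃ : ℤ_[p]) * xv 2 ^ 2 = 1 := by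
    have := expand xv xv 1 hxx; linear_combination this
  have e2 : (a₁ : ℤ_[p]) * yv 0 ^ 2 + (a₂ : ℤ_[p]) * yv 1 ^ 2 + (a₃ : ℤ_[p]) * yv 2 ^ 2
      = -(Δ : ℤ_[p]) := by
    have := expand yv yv _ hyy; linear_combination this
  have e3 : (a₁ : ℤ_[p]) * zv 0 ^ 2 + (a₂ : ℤ_[p]) * zv 1 ^ 2 + (a₃ : ℤ_[p]) * zv 2 ^ 2
      = (p : ℤ_[p]) * (ε : ℤ_[p]) := by
    have := expand zv zv _ hzz; linear_combination this
  have e4 : (a₁ : ℤ_[p]) * xv 0 * yv 0 + (a₂ : ℤ_[p]) * xv 1 * yv 1 + (a₃ : ℤ_[p]) * xv 2 * yv 2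
      = 0 := expand xv yv 0 hxy
  have e5 : (a₁ : ℤ_[p]) * xv 0 * zv 0 + (a₂ : ℤ_[p]) * xv 1 * zv 1 + (a₃ : ℤ_[p]) * xv 2 * zv 2
      = 0 := expand xv zv 0 hxz
  have e6 : (a₁ : ℤ_[p]) * yv 0 * zv 0 + (a₂ : ℤ_[p]) * yv 1 * zv 1 + (a₃ : ℤ_[p]) * yv 2 * zv 2
      = 0 := expand yv zv 0 hyz
  have hpZ : PadicInt.toZMod ((p : ℤ_[p])) = 0 := by
    rw [show ((p : ℤ_[p])) = ((p : ℕ) : ℤ_[p]) from by push_cast; ring, toZMod_natCast,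
      ZMod.natCast_self]
  have hΔZ0 : PadicInt.toZMod ((Δ : ℤ_[p])) ≠ 0 := (isUnit_iff_toZMod_ne_zero _).mp Δ.isUnit
  by_cases h1 : (p : ℤ) ∣ a₁
  · by_cases h2 : (p : ℤ) ∣ a₂
    · -- both a₁, a₂ divisible by p : impossible
      exfalso
      have hZ1 : ((a₁ : ZMod p)) = 0 := (ZMod.intCast_zmod_eq_zero_iff_dvd a₁ p).mpr h1
      have hZ2 : ((a₂ : ZMod p)) = 0 := (ZMod.intCast_zmod_eq_zero_iff_dvd a₂ p).mpr h2
      have f1 := congrArg PadicInt.toZMod e1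
      have f2 := congrArg PadicInt.toZMod e2
      have f4 := congrArg PadicInt.toZMod e4
      simp only [map_add, map_mul, map_pow, map_one, map_neg, map_zero, toZMod_intCast, hZ1, hZ2,
        zero_mul, zero_add] at f1 f2 f4
      have ha3 : ((a₃ : ZMod p)) ≠ 0 := by
        intro h; rw [h, zero_mul] at f1; exact one_ne_zero f1.symm
      have hx2 : PadicInt.toZMod (xv 2) ≠ 0 := by
        intro h; rw [h] at f1; simp at f1
      have hy2 : PadicInt.toZMod (yv 2) ≠ 0 := by
        intro h; rw [h] at f2; simp at f2
        exact hΔZ0 f2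
      rcases mul_eq_zero.mp f4 with h | h
      · rcases mul_eq_zero.mp h with h' | h'
        · exact ha3 h'
        · exact hx2 h'
      · exact hy2 h
    · -- p ∣ a₁, p ∤ a₂ : use K = a₂
      have hZ1 : ((a₁ : ZMod p)) = 0 := (ZMod.intCast_zmod_eq_zero_iff_dvd a₁ p).mpr h1
      have hZ2 : ((a₂ : ZMod p)) ≠ 0 := fun h => h2 ((ZMod.intCast_zmod_eq_zero_iff_dvd a₂ p).mp h)
      obtain ⟨v, s, hv0, hvlt, hsns, hN1mod, hN2mod⟩ :=
        caseB_choice hp u hup (a₁ * α₁ ^ 2 + a₂ * α₂ ^ 2) (a₃ * α₃ ^ 2) a₂ h2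
      have hre1 : (u * v + a₁ * α₁ ^ 2 + a₂ * α₂ ^ 2 : ℤ)
          = u * v + (a₁ * α₁ ^ 2 + a₂ * α₂ ^ 2) := by ring
      have hre2 : (u * v + a₁ * α₁ ^ 2 + a₂ * α₂ ^ 2 + a₃ * α₃ ^ 2 : ℤ)
          = u * v + (a₁ * α₁ ^ 2 + a₂ * α₂ ^ 2) + a₃ * α₃ ^ 2 := by ring
      have hmod1 : ((u * v + a₁ * α₁ ^ 2 + a₂ * α₂ ^ 2 : ℤ) : ZMod p) = (a₂ : ZMod p) * s := by
        rw [hre1]; exact hN1mod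
      have hmod2 : ((u * v + a₁ * α₁ ^ 2 + a₂ * α₂ ^ 2 + a₃ * α₃ ^ 2 : ℤ) : ZMod p) ≠ 0 := by
        rw [hre2]; exact hN2mod
      have hmod1' : PadicInt.toZMod (((u * v + a₁ * α₁ ^ 2 + a₂ * α₂ ^ 2 : ℤ) : ℤ_[p]))
          = (a₂ : ZMod p) * s := by rw [toZMod_intCast]; exact hmod1
      have hmod1ne : ((u * v + a₁ * α₁ ^ 2 + a₂ * α₂ ^ 2 : ℤ) : ZMod p) ≠ 0 := by
        rw [hmod1]; exact mul_ne_zero hZ2 (nonsquare_ne_zero hsns)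
      have H1 : ¬ (∃ x y : ℤ_[p], (a₁ : ℤ_[p]) * x ^ 2 + (a₂ : ℤ_[p]) * y ^ 2 =
          ((u * v + a₁ * α₁ ^ 2 + a₂ * α₂ ^ 2 : ℤ) : ℤ_[p])) := by
        rintro ⟨x, y, hxyeq⟩
        have hmz := congrArg PadicInt.toZMod hxyeq
        rw [map_add, map_mul, map_mul, map_pow, map_pow, toZMod_intCast, toZMod_intCast,
          hmod1', hZ1, zero_mul, zero_add] at hmz
        have := mul_left_cancel₀ hZ2 hmz
        exact hsns ⟨PadicInt.toZMod y, by rw [← this]; ring⟩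
      have hN2u : IsUnit (((u * v + a₁ * α₁ ^ 2 + a₂ * α₂ ^ 2 + a₃ * α₃ ^ 2 : ℤ) : ℤ_[p])) :=
        (isUnit_iff_toZMod_ne_zero _).mpr (by rw [toZMod_intCast]; exact hmod2)
      obtain ⟨A, B, hAB⟩ := exists_norm hp2 Δ hΔ _ hN2u
      have H2 : ∃ x y z : ℤ_[p],
          (a₁ : ℤ_[p]) * x ^ 2 + (a₂ : ℤ_[p]) * y ^ 2 + (a₃ : ℤ_[p]) * z ^ 2 =
            ((u * v + a₁ * α₁ ^ 2 + a₂ * α₂ ^ 2 + a₃ * α₃ ^ 2 : ℤ) : ℤ_[p]) :=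
        ⟨A * xv 0 + B * yv 0, A * xv 1 + B * yv 1, A * xv 2 + B * yv 2, by
          linear_combination A ^ 2 * e1 + B ^ 2 * e2 + 2 * A * B * e4 + hAB⟩
      have hval1 : padicValInt p (u * v + a₁ * α₁ ^ 2 + a₂ * α₂ ^ 2) ≤ 1 :=
        padicValInt_le_one_of_ne _ hmod1ne
      have hval2 : padicValInt p (u * v + a₁ * α₁ ^ 2 + a₂ * α₂ ^ 2 + a₃ * α₃ ^ 2) ≤ 1 :=
        padicValInt_le_one_of_ne _ hmod2
      exact ⟨v, hv0, hvlt, H1, H2, max_le hval1 hval2⟩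

  · by_cases h2 : (p : ℤ) ∣ a₂
    · -- p ∤ a₁, p ∣ a₂ : use K = a₁
      have hZ2 : ((a₂ : ZMod p)) = 0 := (ZMod.intCast_zmod_eq_zero_iff_dvd a₂ p).mpr h2
      have hZ1 : ((a₁ : ZMod p)) ≠ 0 := fun h => h1 ((ZMod.intCast_zmod_eq_zero_iff_dvd a₁ p).mp h)
      obtain ⟨v, s, hv0, hvlt, hsns, hN1mod, hN2mod⟩ :=
        caseB_choice hp u hup (a₁ * α₁ ^ 2 + a₂ * α₂ ^ 2) (a₃ * α₃ ^ 2) a₁ h1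
      have hre1 : (u * v + a₁ * α₁ ^ 2 + a₂ * α₂ ^ 2 : ℤ)
          = u * v + (a₁ * α₁ ^ 2 + a₂ * α₂ ^ 2) := by ring
      have hre2 : (u * v + a₁ * α₁ ^ 2 + a₂ * α₂ ^ 2 + a₃ * α₃ ^ 2 : ℤ)
          = u * v + (a₁ * α₁ ^ 2 + a₂ * α₂ ^ 2) + a₃ * α₃ ^ 2 := by ring
      have hmod1 : ((u * v + a₁ * α₁ ^ 2 + a₂ * α₂ ^ 2 : ℤ) : ZMod p) = (a₁ : ZMod p) * s := by
        rw [hre1]; exact hN1mod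
      have hmod2 : ((u * v + a₁ * α₁ ^ 2 + a₂ * α₂ ^ 2 + a₃ * α₃ ^ 2 : ℤ) : ZMod p) ≠ 0 := by
        rw [hre2]; exact hN2mod
      have hmod1' : PadicInt.toZMod (((u * v + a₁ * α₁ ^ 2 + a₂ * α₂ ^ 2 : ℤ) : ℤ_[p]))
          = (a₁ : ZMod p) * s := by rw [toZMod_intCast]; exact hmod1
      have hmod1ne : ((u * v + a₁ * α₁ ^ 2 + a₂ * α₂ ^ 2 : ℤ) : ZMod p) ≠ 0 := by
        rw [hmod1]; exact mul_ne_zero hZ1 (nonsquare_ne_zero hsns)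
      have H1 : ¬ (∃ x y : ℤ_[p], (a₁ : ℤ_[p]) * x ^ 2 + (a₂ : ℤ_[p]) * y ^ 2 =
          ((u * v + a₁ * α₁ ^ 2 + a₂ * α₂ ^ 2 : ℤ) : ℤ_[p])) := by
        rintro ⟨x, y, hxyeq⟩
        have hmz := congrArg PadicInt.toZMod hxyeq
        rw [map_add, map_mul, map_mul, map_pow, map_pow, toZMod_intCast, toZMod_intCast,
          hmod1', hZ2, zero_mul, add_zero] at hmz
        have := mul_left_cancel₀ hZ1 hmz
        exact hsns ⟨PadicInt.toZMod x, by rw [← this]; ring⟩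
      have hN2u : IsUnit (((u * v + a₁ * α₁ ^ 2 + a₂ * α₂ ^ 2 + a₃ * α₃ ^ 2 : ℤ) : ℤ_[p])) :=
        (isUnit_iff_toZMod_ne_zero _).mpr (by rw [toZMod_intCast]; exact hmod2)
      obtain ⟨A, B, hAB⟩ := exists_norm hp2 Δ hΔ _ hN2u
      have H2 : ∃ x y z : ℤ_[p],
          (a₁ : ℤ_[p]) * x ^ 2 + (a₂ : ℤ_[p]) * y ^ 2 + (a₃ : ℤ_[p]) * z ^ 2 =
            ((u * v + a₁ * α₁ ^ 2 + a₂ * α₂ ^ 2 + a₃ * α₃ ^ 2 : ℤ) : ℤ_[p]) :=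
        ⟨A * xv 0 + B * yv 0, A * xv 1 + B * yv 1, A * xv 2 + B * yv 2, by
          linear_combination A ^ 2 * e1 + B ^ 2 * e2 + 2 * A * B * e4 + hAB⟩
      have hval1 : padicValInt p (u * v + a₁ * α₁ ^ 2 + a₂ * α₂ ^ 2) ≤ 1 :=
        padicValInt_le_one_of_ne _ hmod1ne
      have hval2 : padicValInt p (u * v + a₁ * α₁ ^ 2 + a₂ * α₂ ^ 2 + a₃ * α₃ ^ 2) ≤ 1 :=
        padicValInt_le_one_of_ne _ hmod2
      exact ⟨v, hv0, hvlt, H1, H2, max_le hval1 hval2⟩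

    · -- case A : p ∤ a₁, p ∤ a₂
      have hZ1 : ((a₁ : ZMod p)) ≠ 0 := fun h => h1 ((ZMod.intCast_zmod_eq_zero_iff_dvd a₁ p).mp h)
      have hZ2 : ((a₂ : ZMod p)) ≠ 0 := fun h => h2 ((ZMod.intCast_zmod_eq_zero_iff_dvd a₂ p).mp h)
      -- Step 1: -a₁a₂ is a nonsquare mod p
      have hns : ¬ IsSquare (-((a₁ : ZMod p) * (a₂ : ZMod p))) := by
        intro hsq
        have hKZ : PadicInt.toZMod (((-(a₁ * a₂) : ℤ) : ℤ_[p]))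
            = -((a₁ : ZMod p) * (a₂ : ZMod p)) := by rw [toZMod_intCast]; push_cast; ring
        have hKu : IsUnit (((-(a₁ * a₂) : ℤ) : ℤ_[p])) := (isUnit_iff_toZMod_ne_zero _).mpr (by
          rw [hKZ]; exact neg_ne_zero.mpr (mul_ne_zero hZ1 hZ2))
        obtain ⟨t, ht⟩ := isSquare_of_isSquare_toZMod hp2 _ hKu (hKZ ▸ hsq)
        have ht2 : t * t = -((a₁ : ℤ_[p]) * (a₂ : ℤ_[p])) := by
          rw [← ht]; push_cast; ring
        obtain ⟨n₀, hn₀⟩ := nonsquare_exists hp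
        set m₀ : ℤ_[p] := ((n₀.val : ℕ) : ℤ_[p]) with hm₀
        have hm₀Z : PadicInt.toZMod m₀ = n₀ := by
          rw [hm₀, toZMod_natCast, ZMod.natCast_val, ZMod.cast_id]
        set W : ℤ_[p] := (p : ℤ_[p]) * (ε : ℤ_[p]) * m₀ with hW
        have hA1u : IsUnit ((a₁ : ℤ_[p])) := (isUnit_iff_toZMod_ne_zero _).mpr (by
          rw [toZMod_intCast]; exact hZ1)
        obtain ⟨ia, hia⟩ := isUnit_iff_exists_inv.mp hA1u
        have htu : IsUnit t := by
          have h' : IsUnit (t * t) := by rw [← ht]; exact hKu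
          exact (IsUnit.mul_iff.mp h').1
        obtain ⟨it, hit⟩ := isUnit_iff_exists_inv.mp htu
        obtain ⟨i2, hi2⟩ := isUnit_iff_exists_inv.mp (two_unit hp2)
        set X : ℤ_[p] := (1 + (a₁ : ℤ_[p]) * W) * i2 * ia with hX
        set Y : ℤ_[p] := ((a₁ : ℤ_[p]) * W - 1) * i2 * it with hY
        have h4 : (a₁ : ℤ_[p]) * X ^ 2 = (1 + (a₁ : ℤ_[p]) * W) ^ 2 * i2 ^ 2 * ia := by
          rw [hX]; linear_combination ((1 + (a₁ : ℤ_[p]) * W) ^ 2 * i2 ^ 2 * ia) * hia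
        have h5 : (a₂ : ℤ_[p]) * it ^ 2 = -ia := by
          linear_combination ia * it ^ 2 * ht2 - (a₂ : ℤ_[p]) * it ^ 2 * hia
            - ia * (t * it + 1) * hit
        have h6 : (a₂ : ℤ_[p]) * Y ^ 2 = -(((a₁ : ℤ_[p]) * W - 1) ^ 2 * i2 ^ 2 * ia) := by
          rw [hY]; linear_combination (((a₁ : ℤ_[p]) * W - 1) ^ 2 * i2 ^ 2) * h5
        have hsol : (a₁ : ℤ_[p]) * X ^ 2 + (a₂ : ℤ_[p]) * Y ^ 2 + (a₃ : ℤ_[p]) * (0:ℤ_[p]) ^ 2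
            = W := by
          rw [h4, h6]
          linear_combination (4 * W * i2 ^ 2) * hia + W * (2 * i2 + 1) * hi2
        obtain ⟨A, B, C, hABC⟩ :=
          transfer a₁ a₂ a₃ Δ ε xv yv zv e1 e2 e3 e4 e5 e6 hdet X Y 0 W hsol
        exact key_nonrep hp2 Δ ε hΔ m₀ (by rw [hm₀Z]; exact hn₀) A B C
          (by rw [hABC, hW]; simp)
      -- Step 2: binary form values divisible by p are divisible by p²
      have hbin : ∀ (N x y : ℤ_[p]), (a₁ : ℤ_[p]) * x ^ 2 + (a₂ : ℤ_[p]) * y ^ 2 = N →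
          (p : ℤ_[p]) ∣ N → (p : ℤ_[p]) ^ 2 ∣ N := by
        intro N x y hxyeq hdvd
        have hz : (a₁ : ZMod p) * PadicInt.toZMod x ^ 2 + (a₂ : ZMod p) * PadicInt.toZMod y ^ 2
            = 0 := by
          have := congrArg PadicInt.toZMod hxyeq
          rw [map_add, map_mul, map_mul, map_pow, map_pow, toZMod_intCast, toZMod_intCast] at this
          rw [this]
          exact (dvd_iff_toZMod_eq_zero N).mpr hdvd
        have hyb : PadicInt.toZMod y = 0 := by
          by_contra hyb
          apply hns
          refine ⟨(a₁ : ZMod p) * PadicInt.toZMod x * (PadicInt.toZMod y)⁻¹, ?_⟩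
          have hinv : PadicInt.toZMod y * (PadicInt.toZMod y)⁻¹ = 1 := mul_inv_cancel₀ hyb
          linear_combination (-(a₁ : ZMod p) * ((PadicInt.toZMod y)⁻¹) ^ 2) * hz
            + ((a₁ : ZMod p) * (a₂ : ZMod p)
                * ((PadicInt.toZMod y) * (PadicInt.toZMod y)⁻¹ + 1)) * hinv
        have hxb : PadicInt.toZMod x = 0 := by
          rw [hyb] at hz
          have : (a₁ : ZMod p) * PadicInt.toZMod x ^ 2 = 0 := by linear_combination hz
          rcases mul_eq_zero.mp this with h' | h'
          · exact absurd h' hZ1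
          · exact pow_eq_zero_iff (two_ne_zero) |>.mp h'
        obtain ⟨x', hx'⟩ := (dvd_iff_toZMod_eq_zero x).mp hxb
        obtain ⟨y', hy'⟩ := (dvd_iff_toZMod_eq_zero y).mp hyb
        exact ⟨(a₁ : ℤ_[p]) * x' ^ 2 + (a₂ : ℤ_[p]) * y' ^ 2, by
          rw [← hxyeq, hx', hy']; ring⟩
      -- Step 3: approximate ε by an integer mod p²
      set e : ℕ := PadicInt.appr ((ε : ℤ_[p])) 2 with he
      have hε : (p : ℤ_[p]) ^ 2 ∣ ((ε : ℤ_[p]) - (e : ℤ_[p])) := by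
        have := PadicInt.appr_spec 2 ((ε : ℤ_[p]))
        rwa [Ideal.mem_span_singleton] at this
      -- Step 4: key choice of v given a unit residue mq
      have keyv : ∀ mq : ZMod p, mq ≠ 0 → ∃ v : ℤ, 0 < v ∧ v < (p : ℤ) ^ 2 ∧
          ((p : ℤ_[p]) ^ 2 ∣ (((u * v + a₁ * α₁ ^ 2 + a₂ * α₂ ^ 2 : ℤ) : ℤ_[p])
            - (p : ℤ_[p]) * (ε : ℤ_[p]) * ((mq.val : ℕ) : ℤ_[p]))) ∧
          ((p : ℤ_[p]) ∣ ((u * v + a₁ * α₁ ^ 2 + a₂ * α₂ ^ 2 : ℤ) : ℤ_[p])) ∧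
          ¬ ((p : ℤ_[p]) ^ 2 ∣ ((u * v + a₁ * α₁ ^ 2 + a₂ * α₂ ^ 2 : ℤ) : ℤ_[p])) ∧
          (¬ ∃ x y : ℤ_[p], (a₁ : ℤ_[p]) * x ^ 2 + (a₂ : ℤ_[p]) * y ^ 2 =
              ((u * v + a₁ * α₁ ^ 2 + a₂ * α₂ ^ 2 : ℤ) : ℤ_[p])) ∧
          padicValInt p (u * v + a₁ * α₁ ^ 2 + a₂ * α₂ ^ 2) ≤ 1 := by
        intro mq hmq
        have hm₁Z : PadicInt.toZMod (((mq.val : ℕ) : ℤ_[p])) = mq := by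
          rw [toZMod_natCast, ZMod.natCast_val, ZMod.cast_id]
        have hm₁nd : ¬ ((p : ℤ_[p]) ∣ ((mq.val : ℕ) : ℤ_[p])) := by
          intro hdm
          exact hmq (by rw [← hm₁Z]; exact (dvd_iff_toZMod_eq_zero _).mpr hdm)
        set T : ℤ := (p : ℤ) * (e : ℤ) * ((mq.val : ℕ) : ℤ) - (a₁ * α₁ ^ 2 + a₂ * α₂ ^ 2)
          with hTdef
        have hTc : ((T : ℤ) : ℤ_[p]) = (p : ℤ_[p]) * (e : ℤ_[p]) * ((mq.val : ℕ) : ℤ_[p])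
            - ((a₁ * α₁ ^ 2 + a₂ * α₂ ^ 2 : ℤ) : ℤ_[p]) := by
          rw [hTdef]; push_cast; ring
        have hpe : (p : ℤ_[p]) ^ 2 ∣ ((p : ℤ_[p]) * (ε : ℤ_[p]) * ((mq.val : ℕ) : ℤ_[p])
            - (p : ℤ_[p]) * (e : ℤ_[p]) * ((mq.val : ℕ) : ℤ_[p])) := by
          obtain ⟨k, hk⟩ := hε
          exact ⟨(p : ℤ_[p]) * k * ((mq.val : ℕ) : ℤ_[p]), by
            linear_combination (p : ℤ_[p]) * ((mq.val : ℕ) : ℤ_[p]) * hk⟩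
        have hT : ¬ ((p : ℤ) ^ 2 ∣ T) := by
          intro hTd
          have hTd' : (p : ℤ_[p]) ^ 2 ∣ ((T : ℤ) : ℤ_[p]) := by
            rw [PadicInt.pow_p_dvd_int_iff]; exact_mod_cast hTd
          have hc2 : (p : ℤ_[p]) ^ 2 ∣ ((p : ℤ_[p]) * (ε : ℤ_[p]) * ((mq.val : ℕ) : ℤ_[p])
              - ((a₁ * α₁ ^ 2 + a₂ * α₂ ^ 2 : ℤ) : ℤ_[p])) := by
            obtain ⟨k1, hk1⟩ := hTd'
            obtain ⟨k2, hk2⟩ := hpe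
            rw [hTc] at hk1
            exact ⟨k1 + k2, by linear_combination hk1 + hk2⟩
          have hpc : (p : ℤ_[p]) ∣ ((a₁ * α₁ ^ 2 + a₂ * α₂ ^ 2 : ℤ) : ℤ_[p]) := by
            obtain ⟨k, hk⟩ := hc2
            exact ⟨(ε : ℤ_[p]) * ((mq.val : ℕ) : ℤ_[p]) - (p : ℤ_[p]) * k, by
              linear_combination -hk⟩
          have hcc : (a₁ : ℤ_[p]) * ((α₁ : ℤ) : ℤ_[p]) ^ 2 + (a₂ : ℤ_[p]) * ((α₂ : ℤ) : ℤ_[p]) ^ 2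
              = ((a₁ * α₁ ^ 2 + a₂ * α₂ ^ 2 : ℤ) : ℤ_[p]) := by push_cast; ring
          have hp2c := hbin _ _ _ hcc hpc
          have hppm : (p : ℤ_[p]) ^ 2 ∣ ((p : ℤ_[p]) * ((ε : ℤ_[p]) * ((mq.val : ℕ) : ℤ_[p]))) := by
            obtain ⟨k1, hk1⟩ := hc2
            obtain ⟨k2, hk2⟩ := hp2c
            exact ⟨k1 + k2, by linear_combination hk1 + hk2⟩
          have hdm : (p : ℤ_[p]) ∣ ((ε : ℤ_[p]) * ((mq.val : ℕ) : ℤ_[p])) := by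
            rw [sq] at hppm
            exact (mul_dvd_mul_iff_left (pcast_ne_zero (p := p))).mp hppm
          exact hm₁nd (unit_dvd_cancel ε _ hdm)
        obtain ⟨v, hv0, hvlt, hvd⟩ := exists_v2 u T hup hT
        have hsplit : ((u * v + a₁ * α₁ ^ 2 + a₂ * α₂ ^ 2 : ℤ) : ℤ_[p])
            = ((u * v - T : ℤ) : ℤ_[p])
              + (p : ℤ_[p]) * (e : ℤ_[p]) * ((mq.val : ℕ) : ℤ_[p]) := by
          rw [hTdef]; push_cast; ring
        have hk1' : (p : ℤ_[p]) ^ 2 ∣ ((u * v - T : ℤ) : ℤ_[p]) := by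
          rw [PadicInt.pow_p_dvd_int_iff]; exact_mod_cast hvd
        have hmain : (p : ℤ_[p]) ^ 2 ∣ (((u * v + a₁ * α₁ ^ 2 + a₂ * α₂ ^ 2 : ℤ) : ℤ_[p])
            - (p : ℤ_[p]) * (ε : ℤ_[p]) * ((mq.val : ℕ) : ℤ_[p])) := by
          obtain ⟨k1, hk1⟩ := hk1'
          obtain ⟨k2, hk2⟩ := hpe
          rw [hsplit]
          exact ⟨k1 - k2, by linear_combination hk1 - hk2⟩
        have hpN1 : (p : ℤ_[p]) ∣ ((u * v + a₁ * α₁ ^ 2 + a₂ * α₂ ^ 2 : ℤ) : ℤ_[p]) := by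
          obtain ⟨k, hk⟩ := hmain
          exact ⟨(ε : ℤ_[p]) * ((mq.val : ℕ) : ℤ_[p]) + (p : ℤ_[p]) * k, by
            linear_combination hk⟩
        have hp2N1 : ¬ ((p : ℤ_[p]) ^ 2 ∣ ((u * v + a₁ * α₁ ^ 2 + a₂ * α₂ ^ 2 : ℤ) : ℤ_[p])) := by
          intro hsq
          obtain ⟨k1, hk1⟩ := hsq
          obtain ⟨k2, hk2⟩ := hmain
          have : (p : ℤ_[p]) ∣ ((ε : ℤ_[p]) * ((mq.val : ℕ) : ℤ_[p])) := by
            have hpp : (p : ℤ_[p]) ^ 2 ∣ ((p : ℤ_[p]) * ((ε : ℤ_[p]) * ((mq.val : ℕ) : ℤ_[p]))) :=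
              ⟨k1 - k2, by linear_combination hk1 - hk2⟩
            rw [sq] at hpp
            exact (mul_dvd_mul_iff_left (pcast_ne_zero (p := p))).mp hpp
          exact hm₁nd (unit_dvd_cancel ε _ this)
        refine ⟨v, hv0, hvlt, hmain, hpN1, hp2N1, ?_, padicValInt_le_one_of_pcast _ hp2N1⟩
        rintro ⟨x, y, hxyeq⟩
        exact hp2N1 (hbin _ _ _ hxyeq hpN1)
      by_cases hd : (p : ℤ) ∣ (a₃ * α₃ ^ 2)
      · -- p divides a₃α₃²
        obtain ⟨dt, hdt⟩ := hd
        set εi : ℤ_[p] := ((ε⁻¹ : ℤ_[p]ˣ) : ℤ_[p]) with hεi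
        have hεinv : (ε : ℤ_[p]) * εi = 1 := ε.mul_inv
        set μ : ZMod p := PadicInt.toZMod (εi * ((dt : ℤ) : ℤ_[p])) with hμ
        set wq : ZMod p := if μ = 1 then 2 else 1 with hwq
        have hw2 : wq ^ 2 ≠ μ := by
          rw [hwq]; split_ifs with hμ1
          · rw [hμ1]
            intro h4
            exact three_ne_zero' hp (by linear_combination h4)
          · intro h1'
            exact hμ1 (by linear_combination -h1')
        have hw0 : wq ≠ 0 := by
          rw [hwq]; split_ifs
          · exact two_ne_zero' hp
          · exact one_ne_zero
        obtain ⟨v, hv0, hvlt, hmain, hpN1, hp2N1, H1, hval1⟩ :=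
          keyv (wq ^ 2 - μ) (sub_ne_zero.mpr hw2)
        obtain ⟨ρ, hρ⟩ := hmain
        set mh : ℤ_[p] := (((wq ^ 2 - μ).val : ℕ) : ℤ_[p]) with hmh
        have hmhZ : PadicInt.toZMod mh = wq ^ 2 - μ := by
          rw [hmh, toZMod_natCast, ZMod.natCast_val, ZMod.cast_id]
        set W : ℤ_[p] := mh + εi * ((dt : ℤ) : ℤ_[p]) + (p : ℤ_[p]) * εi * ρ with hWdef
        have hsplit2 : ((u * v + a₁ * α₁ ^ 2 + a₂ * α₂ ^ 2 + a₃ * α₃ ^ 2 : ℤ) : ℤ_[p])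
            = ((u * v + a₁ * α₁ ^ 2 + a₂ * α₂ ^ 2 : ℤ) : ℤ_[p])
              + (p : ℤ_[p]) * ((dt : ℤ) : ℤ_[p]) := by
          rw [show (u * v + a₁ * α₁ ^ 2 + a₂ * α₂ ^ 2 + a₃ * α₃ ^ 2 : ℤ)
              = (u * v + a₁ * α₁ ^ 2 + a₂ * α₂ ^ 2) + (p : ℤ) * dt from by rw [← hdt]]
          push_cast; ring
        have hW : ((u * v + a₁ * α₁ ^ 2 + a₂ * α₂ ^ 2 + a₃ * α₃ ^ 2 : ℤ) : ℤ_[p])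
            = (p : ℤ_[p]) * (ε : ℤ_[p]) * W := by
          rw [hsplit2, hWdef]
          linear_combination hρ
            - ((p : ℤ_[p]) * ((dt : ℤ) : ℤ_[p]) + (p : ℤ_[p]) ^ 2 * ρ) * hεinv
        have hWZ : PadicInt.toZMod W = wq ^ 2 := by
          rw [hWdef, map_add, map_add, hmhZ]
          rw [show PadicInt.toZMod ((p : ℤ_[p]) * εi * ρ) = 0 from by
            rw [map_mul, map_mul, hpZ, zero_mul, zero_mul]]
          rw [← hμ]
          ring
        have hWu : IsUnit W := (isUnit_iff_toZMod_ne_zero W).mpr (by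
          rw [hWZ]; exact pow_ne_zero 2 hw0)
        obtain ⟨sr, hsr⟩ := isSquare_of_isSquare_toZMod hp2 W hWu ⟨wq, by rw [hWZ]; ring⟩
        have H2 : ∃ x y z : ℤ_[p],
            (a₁ : ℤ_[p]) * x ^ 2 + (a₂ : ℤ_[p]) * y ^ 2 + (a₃ : ℤ_[p]) * z ^ 2 =
              ((u * v + a₁ * α₁ ^ 2 + a₂ * α₂ ^ 2 + a₃ * α₃ ^ 2 : ℤ) : ℤ_[p]) :=
          ⟨sr * zv 0, sr * zv 1, sr * zv 2, by
            linear_combination (sr * sr) * e3 - ((p : ℤ_[p]) * (ε : ℤ_[p])) * hsr - hW⟩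
        have hp2N2 : ¬ ((p : ℤ_[p]) ^ 2 ∣
            ((u * v + a₁ * α₁ ^ 2 + a₂ * α₂ ^ 2 + a₃ * α₃ ^ 2 : ℤ) : ℤ_[p])) := by
          rintro ⟨k, hk⟩
          rw [hW] at hk
          have hdW : (p : ℤ_[p]) ∣ ((ε : ℤ_[p]) * W) := by
            have hpp : (p : ℤ_[p]) * (p : ℤ_[p]) ∣ (p : ℤ_[p]) * ((ε : ℤ_[p]) * W) :=
              ⟨k, by linear_combination hk⟩
            exact (mul_dvd_mul_iff_left (pcast_ne_zero (p := p))).mp hpp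
          have := unit_dvd_cancel ε _ hdW
          have := (dvd_iff_toZMod_eq_zero W).mpr this
          rw [hWZ] at this
          exact pow_ne_zero 2 hw0 this
        exact ⟨v, hv0, hvlt, H1, H2, max_le hval1 (padicValInt_le_one_of_pcast _ hp2N2)⟩
      · -- p does not divide a₃α₃²
        obtain ⟨v, hv0, hvlt, hmain, hpN1, hp2N1, H1, hval1⟩ := keyv 1 one_ne_zero
        have hdz : ((a₃ * α₃ ^ 2 : ℤ) : ZMod p) ≠ 0 :=
          fun h => hd ((ZMod.intCast_zmod_eq_zero_iff_dvd _ p).mp h)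
        have hN1z : ((u * v + a₁ * α₁ ^ 2 + a₂ * α₂ ^ 2 : ℤ) : ZMod p) = 0 := by
          rw [← toZMod_intCast (p := p)]
          exact (dvd_iff_toZMod_eq_zero _).mpr hpN1
        have hmod2 : ((u * v + a₁ * α₁ ^ 2 + a₂ * α₂ ^ 2 + a₃ * α₃ ^ 2 : ℤ) : ZMod p) ≠ 0 := by
          have hsplit : ((u * v + a₁ * α₁ ^ 2 + a₂ * α₂ ^ 2 + a₃ * α₃ ^ 2 : ℤ) : ZMod p)
              = ((u * v + a₁ * α₁ ^ 2 + a₂ * α₂ ^ 2 : ℤ) : ZMod p)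
                + ((a₃ * α₃ ^ 2 : ℤ) : ZMod p) := by push_cast; ring
          rw [hsplit, hN1z, zero_add]
          exact hdz
        have hN2u : IsUnit (((u * v + a₁ * α₁ ^ 2 + a₂ * α₂ ^ 2 + a₃ * α₃ ^ 2 : ℤ) : ℤ_[p])) :=
          (isUnit_iff_toZMod_ne_zero _).mpr (by rw [toZMod_intCast]; exact hmod2)
        obtain ⟨A, B, hAB⟩ := exists_norm hp2 Δ hΔ _ hN2u
        have H2 : ∃ x y z : ℤ_[p],
            (a₁ : ℤ_[p]) * x ^ 2 + (a₂ : ℤ_[p]) * y ^ 2 + (a₃ : ℤ_[p]) * z ^ 2 =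
              ((u * v + a₁ * α₁ ^ 2 + a₂ * α₂ ^ 2 + a₃ * α₃ ^ 2 : ℤ) : ℤ_[p]) :=
          ⟨A * xv 0 + B * yv 0, A * xv 1 + B * yv 1, A * xv 2 + B * yv 2, by
            linear_combination A ^ 2 * e1 + B ^ 2 * e2 + 2 * A * B * e4 + hAB⟩
        exact ⟨v, hv0, hvlt, H1, H2, max_le hval1 (padicValInt_le_one_of_ne _ hmod2)⟩
end

section
/- Let p be an odd prime. Define ψ_p(p^s) = (p^s+p+2)/(2p+2) for s odd and (p^s+2p+1)/(2p+2) for s even, and for n with base-p expansion n = Σ b_s p^s define ψ_p(n) = Σ_{s≥1} b_s ψ_p(p^s), plus 1 if b₀ ≠ 0. Then for every prime p > 3 and every positive integer n, ψ_p(n) ≤ ⌈n/p⌉, and for fixed n the set of primes p > 3 with ψ_p(n) > 1 is finite. -/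
open scoped BigOperators

/-- `ψ_p(p^s)`. -/
noncomputable def psiTerm (p s : ℕ) : ℚ :=
  if Odd s then ((p : ℚ) ^ s + p + 2) / (2 * p + 2)
  else ((p : ℚ) ^ s + 2 * p + 1) / (2 * p + 2)

/-- `ψ_p(n) = Σ_{s ≥ 1} b_s ψ_p(p^s)` (base-`p` digits `b_s = n / p^s % p`),
plus 1 if the last digit `b₀ = n % p` is nonzero. -/
noncomputable def psi (p n : ℕ) : ℚ :=
  (if n % p ≠ 0 then 1 else 0) +
    ∑ s ∈ Finset.Icc 1 (Nat.log p n), ((n / p ^ s % p : ℕ) : ℚ) * psiTerm p s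

lemma digit_sum (p m k : ℕ) :
    ∑ i ∈ Finset.range k, (m / p ^ i % p) * p ^ i = m % p ^ k := by
  induction k with
  | zero => simp [Nat.mod_one]
  | succ k ih =>
    rw [Finset.sum_range_succ, ih, pow_succ, Nat.mod_mul]
    ring

lemma psiTerm_le (p s : ℕ) (hp : 2 ≤ p) (hs : 1 ≤ s) :
    psiTerm p s ≤ (p : ℚ) ^ (s - 1) := by
  obtain ⟨t, rfl⟩ := Nat.exists_eq_add_of_le hs
  have hp' : (2 : ℚ) ≤ (p : ℚ) := by exact_mod_cast hp
  have hden : (0 : ℚ) < 2 * p + 2 := by positivity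
  have hpt : (1 : ℚ) ≤ (p : ℚ) ^ t := one_le_pow₀ (by linarith)
  have he : (1 : ℕ) + t - 1 = t := by omega
  simp only [psiTerm, he]
  split_ifs with h
  all_goals rw [div_le_iff₀ hden]
  · have : (p : ℚ) ^ (1 + t) = p * p ^ t := by rw [pow_add, pow_one]
    rw [this]
    nlinarith
  · have ht : 1 ≤ t := by
      rcases Nat.eq_zero_or_pos t with h0 | h0
      · exfalso; exact h (by simp [h0])
      · exact h0
    obtain ⟨u, rfl⟩ := Nat.exists_eq_add_of_le ht
    have hpu : (1 : ℚ) ≤ (p : ℚ) ^ u := one_le_pow₀ (by linarith)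
    have h2 : (p : ℚ) ^ (1 + (1 + u)) = p * p * p ^ u := by
      rw [pow_add, pow_add, pow_one]; ring
    rw [h2]
    have h3 : (p : ℚ) ^ (1 + u) = p * p ^ u := by rw [pow_add, pow_one]
    rw [h3]
    nlinarith

/-- for every prime `p > 3`, `ψ_p(n) ≤ ⌈n/p⌉`, and for fixed `n`
only finitely many primes `p > 3` have `ψ_p(n) > 1`. -/
theorem stmt_19 (n : ℕ) (hn : 0 < n) :
    (∀ p : ℕ, Nat.Prime p → 3 < p → psi p n ≤ (⌈(n : ℚ) / (p : ℚ)⌉ : ℚ)) ∧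
      {p : ℕ | Nat.Prime p ∧ 3 < p ∧ 1 < psi p n}.Finite := by
  constructor
  · intro p hp hp3
    have hp1 : 1 < p := hp.one_lt
    have hp2 : 2 ≤ p := hp1
    have hppos : 0 < p := by omega
    have hp0 : (0 : ℚ) < p := by exact_mod_cast hppos
    set L := Nat.log p n with hL
    -- nat digit identity
    have key : ∑ s ∈ Finset.Icc 1 L, (n / p ^ s % p) * p ^ (s - 1) = n / p := by
      have h1 : ∑ s ∈ Finset.Icc 1 L, (n / p ^ s % p) * p ^ (s - 1)
          = ∑ t ∈ Finset.range (L + 1 - 1), (n / p ^ (1 + t) % p) * p ^ (1 + t - 1) := by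
        rw [← Finset.Ico_add_one_right_eq_Icc, Finset.sum_Ico_eq_sum_range]
      have h2 : ∀ t : ℕ, (n / p ^ (1 + t) % p) * p ^ (1 + t - 1)
          = ((n / p) / p ^ t % p) * p ^ t := by
        intro t
        have : p ^ (1 + t) = p * p ^ t := by rw [pow_add, pow_one]
        rw [this, ← Nat.div_div_eq_div_mul]
        congr 2
        omega
      rw [h1]
      simp only [h2, Nat.add_sub_cancel]
      rw [digit_sum]
      apply Nat.mod_eq_of_lt
      rw [Nat.div_lt_iff_lt_mul hppos]
      have := Nat.lt_pow_succ_log_self hp1 n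
      calc n < p ^ (L + 1) := this
        _ = p ^ L * p := by rw [pow_succ]
    -- rational sum bound
    have hsumQ : ∑ s ∈ Finset.Icc 1 L, ((n / p ^ s % p : ℕ) : ℚ) * psiTerm p s
        ≤ ((n / p : ℕ) : ℚ) := by
      calc ∑ s ∈ Finset.Icc 1 L, ((n / p ^ s % p : ℕ) : ℚ) * psiTerm p s
          ≤ ∑ s ∈ Finset.Icc 1 L, ((n / p ^ s % p : ℕ) : ℚ) * (p : ℚ) ^ (s - 1) := by
            apply Finset.sum_le_sum
            intro s hs
            exact mul_le_mul_of_nonneg_left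
              (psiTerm_le p s hp2 (Finset.mem_Icc.mp hs).1) (Nat.cast_nonneg _)
        _ = ((n / p : ℕ) : ℚ) := by
            rw [← key]
            push_cast
            rfl
    -- ceiling bound
    have hceil : ((n / p : ℕ) : ℚ) + (if n % p ≠ 0 then (1 : ℚ) else 0)
        ≤ (⌈(n : ℚ) / (p : ℚ)⌉ : ℚ) := by
      split_ifs with h
      · have h1 : ((n / p : ℕ) : ℤ) < ⌈(n : ℚ) / (p : ℚ)⌉ := by
          rw [Int.lt_ceil]
          push_cast
          rw [lt_div_iff₀ hp0]
          have hnat : n / p * p < n := by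
            rw [Nat.mul_comm]
            have := Nat.div_add_mod n p
            have hmod : n % p < p := Nat.mod_lt n hppos
            omega
          exact_mod_cast hnat
        have h2 : ((n / p : ℕ) : ℤ) + 1 ≤ ⌈(n : ℚ) / (p : ℚ)⌉ := h1
        have h3 : ((((n / p : ℕ) : ℤ) : ℚ)) + 1 ≤ ((⌈(n : ℚ) / (p : ℚ)⌉ : ℤ) : ℚ) := by
          exact_mod_cast h2
        rw [Int.cast_natCast] at h3
        exact h3
      · push_neg at h
        have hdvd : p ∣ n := Nat.dvd_of_mod_eq_zero h
        have hx : (n : ℚ) / (p : ℚ) = ((n / p : ℕ) : ℚ) := by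
          rw [div_eq_iff (ne_of_gt hp0)]
          exact_mod_cast (Nat.div_mul_cancel hdvd).symm
        rw [hx, Int.ceil_natCast]
        simp only [Int.cast_natCast, add_zero, le_refl]
    show (if n % p ≠ 0 then (1 : ℚ) else 0)
        + ∑ s ∈ Finset.Icc 1 L, ((n / p ^ s % p : ℕ) : ℚ) * psiTerm p s
        ≤ (⌈(n : ℚ) / (p : ℚ)⌉ : ℚ)
    linarith
  · apply Set.Finite.subset (Set.finite_Iic n)
    intro p hp
    simp only [Set.mem_Iic]
    by_contra hpn
    push_neg at hpn
    obtain ⟨hprime, hp3, hpsi⟩ := hp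
    have h1 : n % p = n := Nat.mod_eq_of_lt hpn
    have h2 : Nat.log p n = 0 := Nat.log_eq_zero_iff.mpr (Or.inl hpn)
    have : psi p n = 1 := by
      simp [psi, h1, h2, hn.ne']
    linarith
end
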